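/- arXiv:2310.17828 — 5 statements merged into one kernel-verified Lean document; each statement's English description precedes it below -/
import Mathlib

section
/- For all real numbers c > 0 and m with 1 < m < 2, the function x ↦ (1 − e^{−cx})/x^m is Lebesgue integrable on (0,∞) and ∫_0^∞ (1 − e^{−cx})/x^m dx = c^{m−1} Γ(2−m)/(m−1), where Γ is the Gamma function. -/
open MeasureTheory Set Filter Topology

lemma aux_integrable (c m : ℝ) (hc : 0 < c) (hm1 : 1 < m) (hm2 : m < 2) :
    IntegrableOn (fun x : ℝ => (1 - Real.exp (-(c * x))) * x ^ (-m)) (Set.Ioi 0) := by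
  have hmeas : AEStronglyMeasurable (fun x : ℝ => (1 - Real.exp (-(c * x))) * x ^ (-m))
      (volume.restrict (Ioi (0:ℝ))) := by
    refine ContinuousOn.aestronglyMeasurable ?_ measurableSet_Ioi
    refine ContinuousOn.mul (by fun_prop) ?_
    intro x hx
    exact (Real.continuousAt_rpow_const x (-m) (Or.inl (ne_of_gt hx))).continuousWithinAt
  have hbound1 : ∀ x ∈ Ioo (0:ℝ) 1,
      ‖(1 - Real.exp (-(c * x))) * x ^ (-m)‖ ≤ c * x ^ (1 - m) := by
    intro x hx
    have hx0 : 0 < x := hx.1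
    have h1 : Real.exp (-(c * x)) ≤ 1 := Real.exp_le_one_iff.mpr (by nlinarith)
    have h2 : 1 - Real.exp (-(c * x)) ≤ c * x := by
      have := Real.add_one_le_exp (-(c * x)); linarith
    have h3 : (0:ℝ) < x ^ (-m) := Real.rpow_pos_of_pos hx0 _
    rw [Real.norm_eq_abs, abs_mul, abs_of_nonneg (by linarith), abs_of_pos h3]
    calc (1 - Real.exp (-(c * x))) * x ^ (-m) ≤ (c * x) * x ^ (-m) := by nlinarith
      _ = c * x ^ (1 - m) := by
          rw [mul_assoc, ← Real.rpow_one_add' hx0.le (by intro h; linarith)]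
          ring_nf
  have hbound2 : ∀ x ∈ Ioi (1:ℝ),
      ‖(1 - Real.exp (-(c * x))) * x ^ (-m)‖ ≤ x ^ (-m) := by
    intro x hx
    have hx0 : (0:ℝ) < x := lt_trans one_pos hx
    have h1 : Real.exp (-(c * x)) ≤ 1 := Real.exp_le_one_iff.mpr (by nlinarith)
    have h1' : 0 < Real.exp (-(c * x)) := Real.exp_pos _
    have h3 : (0:ℝ) < x ^ (-m) := Real.rpow_pos_of_pos hx0 _
    rw [Real.norm_eq_abs, abs_mul, abs_of_nonneg (by linarith), abs_of_pos h3]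
    nlinarith
  have h01 : IntegrableOn (fun x : ℝ => (1 - Real.exp (-(c * x))) * x ^ (-m)) (Ioo 0 1) := by
    refine Integrable.mono' ?_ (hmeas.mono_measure (Measure.restrict_mono Ioo_subset_Ioi_self le_rfl))
      (Filter.eventually_of_mem (self_mem_ae_restrict measurableSet_Ioo) hbound1)
    have : IntegrableOn (fun x : ℝ => x ^ (1 - m)) (Ioo 0 1) :=
      (intervalIntegral.integrableOn_Ioo_rpow_iff one_pos).mpr (by linarith)
    exact (this.const_mul c)
  have hI : IntegrableOn (fun x : ℝ => (1 - Real.exp (-(c * x))) * x ^ (-m)) (Ioi 1) := by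
    refine Integrable.mono' (integrableOn_Ioi_rpow_of_lt (by linarith) one_pos)
      (hmeas.mono_measure (Measure.restrict_mono (Ioi_subset_Ioi zero_le_one) le_rfl))
      (Filter.eventually_of_mem (self_mem_ae_restrict measurableSet_Ioi) hbound2)
  have h01' : IntegrableOn (fun x : ℝ => (1 - Real.exp (-(c * x))) * x ^ (-m)) (Ioc 0 1) :=
    Iff.mpr integrableOn_Ioc_iff_integrableOn_Ioo h01
  have : IntegrableOn (fun x : ℝ => (1 - Real.exp (-(c * x))) * x ^ (-m)) (Ioc 0 1 ∪ Ioi 1) :=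
    h01'.union hI
  exact this.mono_set (fun x hx => by
    rcases le_or_gt x 1 with h | h
    · exact Or.inl ⟨hx, h⟩
    · exact Or.inr h)

/-- for `c > 0` and `1 < m < 2`, the function `x ↦ (1 − e^{−cx})/x^m` is
Lebesgue integrable on `(0,∞)` and `∫_0^∞ (1 − e^{−cx})/x^m dx = c^{m−1} Γ(2−m)/(m−1)`. -/
theorem stmt5 (c m : ℝ) (hc : 0 < c) (hm1 : 1 < m) (hm2 : m < 2) :
    IntegrableOn (fun x : ℝ => (1 - Real.exp (-(c * x))) / x ^ m) (Set.Ioi 0) ∧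
      ∫ x in Set.Ioi (0 : ℝ), (1 - Real.exp (-(c * x))) / x ^ m =
        c ^ (m - 1) * Real.Gamma (2 - m) / (m - 1) := by
  have hInt : IntegrableOn (fun x : ℝ => (1 - Real.exp (-(c * x))) / x ^ m) (Ioi 0) := by
    refine (aux_integrable c m hc hm1 hm2).congr_fun (fun x hx => ?_) measurableSet_Ioi
    beta_reduce
    rw [Real.rpow_neg (le_of_lt hx), div_eq_mul_inv]
  refine ⟨hInt, ?_⟩
  have hcongr : ∫ x in Ioi (0:ℝ), (1 - Real.exp (-(c * x))) / x ^ m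
      = ∫ x in Ioi (0:ℝ), (1 - Real.exp (-(c * x))) * x ^ (-m) := by
    refine setIntegral_congr_fun measurableSet_Ioi (fun x hx => ?_)
    rw [Real.rpow_neg (le_of_lt hx), div_eq_mul_inv]
  set u := fun x : ℝ => 1 - Real.exp (-(c * x)) with hu_def
  set F := fun x : ℝ => c * Real.exp (-(c * x)) with hF_def
  set v := fun x : ℝ => x ^ (1 - m) / (1 - m) with hv_def
  set G := fun x : ℝ => x ^ (-m) with hG_def
  have hm' : (1:ℝ) - m ≠ 0 := by intro h; linarith
  have hm'' : (0:ℝ) < m - 1 := by linarith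
  have h2m : (0:ℝ) < 2 - m := by linarith
  have hu : ∀ x ∈ Ioi (0:ℝ), HasDerivAt u (F x) x := by
    intro x _
    have h1 : HasDerivAt (fun x : ℝ => -(c * x)) (-c) x := by
      have := ((hasDerivAt_id x).const_mul c).neg
      rw [mul_one] at this
      exact this
    have h2 := (h1.exp).const_sub 1
    simpa [hu_def, hF_def, mul_comm] using h2
  have hv : ∀ x ∈ Ioi (0:ℝ), HasDerivAt v (G x) x := by
    intro x hx
    have h1 := (Real.hasDerivAt_rpow_const (p := 1 - m) (Or.inl (ne_of_gt hx))).div_const (1 - m)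
    have h2 : (1 - m) * x ^ (1 - m - 1) / (1 - m) = x ^ (-m) := by
      rw [show (1:ℝ) - m - 1 = -m by ring, mul_comm, mul_div_assoc, div_self hm', mul_one]
    rw [h2] at h1
    exact h1
  have huv' : IntegrableOn (fun x => u x * G x) (Ioi 0) := aux_integrable c m hc hm1 hm2
  have hGam : IntegrableOn (fun x : ℝ => x ^ (1 - m) * Real.exp (-c * x ^ (1:ℝ))) (Ioi 0) :=
    integrableOn_rpow_mul_exp_neg_mul_rpow (by linarith) one_pos hc
  have hu'v : IntegrableOn (fun x => F x * v x) (Ioi 0) := by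
    refine IntegrableOn.congr_fun (Integrable.const_mul hGam (c / (1 - m))) (fun x hx => ?_) measurableSet_Ioi
    simp only [hF_def, hv_def, Real.rpow_one]
    field_simp
  have h_zero : Tendsto (fun x => u x * v x) (𝓝[>] (0:ℝ)) (𝓝 0) := by
    have hg : Tendsto (fun x : ℝ => (c / (m - 1)) * x ^ (2 - m)) (𝓝[>] (0:ℝ)) (𝓝 0) := by
      have := ((Real.continuousAt_rpow_const 0 (2 - m) (Or.inr h2m.le)).tendsto).const_mul
        (c / (m - 1))
      rw [Real.zero_rpow (ne_of_gt h2m), mul_zero] at this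
      exact this.mono_left nhdsWithin_le_nhds
    refine squeeze_zero_norm' ?_ hg
    filter_upwards [self_mem_nhdsWithin] with x hx
    have hx0 : (0:ℝ) < x := hx
    have h1 : Real.exp (-(c * x)) ≤ 1 := Real.exp_le_one_iff.mpr (by nlinarith)
    have h2 : 1 - Real.exp (-(c * x)) ≤ c * x := by
      have := Real.add_one_le_exp (-(c * x)); linarith
    have h3 : (0:ℝ) < x ^ (1 - m) := Real.rpow_pos_of_pos hx0 _
    have h4 : x * x ^ (1 - m) = x ^ (2 - m) := by
      rw [← Real.rpow_one_add' hx0.le (by intro h; linarith)]; ring_nf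
    simp only [hu_def, hv_def, Real.norm_eq_abs, abs_mul, abs_div]
    rw [abs_of_nonneg (by linarith), abs_of_pos h3, abs_of_neg (by linarith : 1 - m < 0)]
    rw [show -(1 - m) = m - 1 by ring, ← mul_div_assoc, div_le_iff₀ hm'']
    have h5 : c / (m - 1) * x ^ (2 - m) * (m - 1) = c * (x * x ^ (1 - m)) := by
      rw [h4]; field_simp
    rw [h5]
    nlinarith
  have h_infty : Tendsto (fun x => u x * v x) atTop (𝓝 0) := by
    have hg : Tendsto (fun x : ℝ => x ^ (-(m - 1)) / (m - 1)) atTop (𝓝 0) := by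
      simpa using (tendsto_rpow_neg_atTop hm'').div_const (m - 1)
    refine squeeze_zero_norm' ?_ hg
    filter_upwards [eventually_gt_atTop (0:ℝ)] with x hx0
    have h1 : Real.exp (-(c * x)) ≤ 1 := Real.exp_le_one_iff.mpr (by nlinarith)
    have h1' : 0 < Real.exp (-(c * x)) := Real.exp_pos _
    have h3 : (0:ℝ) < x ^ (1 - m) := Real.rpow_pos_of_pos hx0 _
    simp only [hu_def, hv_def, Real.norm_eq_abs, abs_mul, abs_div]
    rw [abs_of_nonneg (by linarith), abs_of_pos h3, abs_of_neg (by linarith : 1 - m < 0),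
      show -(m - 1) = 1 - m by ring]
    rw [show -(1 - m) = m - 1 by ring, ← mul_div_assoc, div_le_div_iff₀ hm'' hm'']
    nlinarith [mul_pos h3 hm'', mul_pos h1' (mul_pos h3 hm'')]
  have key := integral_Ioi_mul_deriv_eq_deriv_mul hu hv huv' hu'v h_zero h_infty
  have hval : ∫ x in Ioi (0:ℝ), F x * v x
      = c / (1 - m) * ((1 / c) ^ (2 - m) * Real.Gamma (2 - m)) := by
    rw [show (fun x => F x * v x) = fun x : ℝ =>
        c / (1 - m) * (x ^ (2 - m - 1) * Real.exp (-(c * x))) from funext fun x => by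
      simp only [hF_def, hv_def, show (2:ℝ) - m - 1 = 1 - m by ring]
      field_simp]
    rw [integral_const_mul, Real.integral_rpow_mul_exp_neg_mul_Ioi h2m hc]
  rw [hcongr]
  have hkey2 : ∫ x in Ioi (0:ℝ), (1 - Real.exp (-(c * x))) * x ^ (-m)
      = 0 - 0 - (c / (1 - m) * ((1 / c) ^ (2 - m) * Real.Gamma (2 - m))) := by
    rw [← hval]; exact key
  rw [hkey2]
  have hcexp : c ^ (m - 1) * c ^ (2 - m) = c := by
    rw [← Real.rpow_add hc]; norm_num
  have hcpos : (0:ℝ) < c ^ (2 - m) := Real.rpow_pos_of_pos hc _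
  rw [one_div, Real.inv_rpow hc.le,
    show c ^ (m - 1) = c / c ^ (2 - m) from by rw [eq_div_iff hcpos.ne']; exact hcexp]
  field_simp
  ring
end

section
/- For all real numbers c > 0 and m with 1 < m < 3, the function x ↦ (1 − e^{−cx²})/x^m is Lebesgue integrable on (0,∞) and ∫_0^∞ (1 − e^{−cx²})/x^m dx = −(c^{(m−1)/2}/2) Γ((1−m)/2), where Γ is the Gamma function (note that Γ((1−m)/2) < 0 for 1 < m < 3, so the right-hand side is positive). -/
open MeasureTheory Real Set Filter

private lemma aux_bound {c m x : ℝ} (hc : 0 < c) (hx : 0 < x) :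
    (1 - Real.exp (-(c * x ^ 2))) / x ^ m ≤ c * x ^ (2 - m) := by
  have h1 : 1 - Real.exp (-(c * x ^ 2)) ≤ c * x ^ 2 := by
    have := Real.add_one_le_exp (-(c * x ^ 2))
    linarith
  have hxm : (0:ℝ) < x ^ m := Real.rpow_pos_of_pos hx m
  rw [div_le_iff₀ hxm]
  calc 1 - Real.exp (-(c * x ^ 2)) ≤ c * x ^ 2 := h1
    _ = c * x ^ (2 - m) * x ^ m := by
        rw [mul_assoc, ← Real.rpow_add hx]
        norm_num

/-- for `c > 0` and `1 < m < 3`, the function `x ↦ (1 − e^{−cx²})/x^m` is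
Lebesgue integrable on `(0,∞)` and
`∫_0^∞ (1 − e^{−cx²})/x^m dx = −(c^{(m−1)/2}/2) Γ((1−m)/2)`. -/
theorem stmt6 (c m : ℝ) (hc : 0 < c) (hm1 : 1 < m) (hm2 : m < 3) :
    IntegrableOn (fun x : ℝ => (1 - Real.exp (-(c * x ^ 2))) / x ^ m) (Set.Ioi 0) ∧
      ∫ x in Set.Ioi (0 : ℝ), (1 - Real.exp (-(c * x ^ 2))) / x ^ m =
        -(c ^ ((m - 1) / 2) / 2) * Real.Gamma ((1 - m) / 2) := by
  have hm0 : (1:ℝ) - m ≠ 0 := by linarith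
  set g : ℝ → ℝ := fun x => (1 - Real.exp (-(c * x ^ 2))) / x ^ m with hg
  set h : ℝ → ℝ := fun x => (2 * c / (1 - m)) * (x ^ (2 - m) * Real.exp (-c * x ^ (2:ℝ)))
    with hh
  set F : ℝ → ℝ := fun x => (1 - Real.exp (-(c * x ^ 2))) * x ^ (1 - m) / (1 - m) with hF
  -- nonnegativity of g on Ioi 0
  have hg_nonneg : ∀ x : ℝ, 0 < x → 0 ≤ g x := by
    intro x hx
    apply div_nonneg _ (Real.rpow_nonneg hx.le m)
    have : Real.exp (-(c * x ^ 2)) ≤ 1 := by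
      rw [Real.exp_le_one_iff]
      nlinarith
    linarith
  -- measurability
  have hg_meas : AEStronglyMeasurable g (volume.restrict (Set.Ioi (0:ℝ))) := by
    apply Measurable.aestronglyMeasurable
    fun_prop
  -- integrability of g
  have hg_int : IntegrableOn g (Set.Ioi 0) := by
    have hsplit : Set.Ioc (0:ℝ) 1 ∪ Set.Ioi 1 = Set.Ioi 0 :=
      Set.Ioc_union_Ioi_eq_Ioi zero_le_one
    rw [← hsplit]
    apply IntegrableOn.union
    · -- on Ioc 0 1 : bound by c * x ^ (2 - m)
      have hbnd : IntegrableOn (fun x : ℝ => c * x ^ (2 - m)) (Set.Ioc 0 1) := by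
        have := (intervalIntegral.intervalIntegrable_rpow'
          (show (-1:ℝ) < 2 - m by linarith) (a := 0) (b := 1))
        rw [intervalIntegrable_iff_integrableOn_Ioc_of_le zero_le_one] at this
        exact this.const_mul c
      refine Integrable.mono' hbnd (hg_meas.mono_set Set.Ioc_subset_Ioi_self) ?_
      filter_upwards [ae_restrict_mem measurableSet_Ioc] with x hx
      rw [Real.norm_eq_abs, abs_of_nonneg (hg_nonneg x hx.1)]
      exact aux_bound hc hx.1
    · -- on Ioi 1 : bound by x ^ (-m)
      have hbnd : IntegrableOn (fun x : ℝ => x ^ (-m)) (Set.Ioi 1) :=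
        integrableOn_Ioi_rpow_of_lt (by linarith) one_pos
      refine Integrable.mono' hbnd (hg_meas.mono_set (Set.Ioi_subset_Ioi zero_le_one)) ?_
      filter_upwards [ae_restrict_mem measurableSet_Ioi] with x hx
      have hx0 : (0:ℝ) < x := lt_trans one_pos hx
      rw [Real.norm_eq_abs, abs_of_nonneg (hg_nonneg x hx0)]
      show (1 - Real.exp (-(c * x ^ 2))) / x ^ m ≤ x ^ (-m)
      rw [Real.rpow_neg hx0.le, div_eq_mul_inv]
      have hexp : Real.exp (-(c * x ^ 2)) ≤ 1 := by
        rw [Real.exp_le_one_iff]; nlinarith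
      have : (0:ℝ) ≤ (x ^ m)⁻¹ := by positivity
      nlinarith [Real.exp_pos (-(c * x ^ 2))]
  -- integrability of h
  have hh_int : IntegrableOn h (Set.Ioi 0) := by
    exact (integrableOn_rpow_mul_exp_neg_mul_rpow
      (show (-1:ℝ) < 2 - m by linarith) two_pos hc).const_mul _
  -- derivative of F
  have hF_deriv : ∀ x ∈ Set.Ioi (0:ℝ), HasDerivAt F (g x + h x) x := by
    intro x hx
    have hx0 : (0:ℝ) < x := hx
    have h1 : HasDerivAt (fun x : ℝ => c * x ^ 2) (c * (2 * x ^ 1)) x :=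
      (hasDerivAt_pow 2 x).const_mul c
    have h2 : HasDerivAt (fun x : ℝ => 1 - Real.exp (-(c * x ^ 2)))
        (-(Real.exp (-(c * x ^ 2)) * -(c * (2 * x ^ 1)))) x := (h1.neg.exp).const_sub 1
    have h3 : HasDerivAt (fun x : ℝ => x ^ (1 - m)) ((1 - m) * x ^ (1 - m - 1)) x :=
      Real.hasDerivAt_rpow_const (Or.inl hx0.ne')
    have h4 := (h2.mul h3).div_const (1 - m)
    refine h4.congr_deriv ?_
    symm
    simp only [hg, hh]
    have e1 : x ^ (1 - m - 1) = x ^ (-m) := by norm_num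
    have e2 : x * x ^ (1 - m) = x ^ (2 - m) := by
      rw [show x * x ^ (1 - m) = x ^ (1:ℝ) * x ^ (1-m) by rw [Real.rpow_one],
        ← Real.rpow_add hx0]
      congr 1
      ring
    have e3 : Real.exp (-c * x ^ (2:ℝ)) = Real.exp (-(c * x ^ 2)) := by
      rw [show (2:ℝ) = ((2:ℕ):ℝ) by norm_num, Real.rpow_natCast]
      ring_nf
    rw [e1, e3, Real.rpow_neg hx0.le]
    field_simp
    rw [← e2]
    ring
  -- F tends to 0 at atTop
  have hF_top : Tendsto F atTop (nhds 0) := by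
    have t1 : Tendsto (fun x : ℝ => c * x ^ 2) atTop atTop :=
      (tendsto_pow_atTop two_ne_zero).const_mul_atTop hc
    have t2 : Tendsto (fun x : ℝ => Real.exp (-(c * x ^ 2))) atTop (nhds 0) :=
      Real.tendsto_exp_atBot.comp (tendsto_neg_atBot_iff.mpr t1)
    have t3 : Tendsto (fun x : ℝ => x ^ (1 - m)) atTop (nhds 0) := by
      have := tendsto_rpow_neg_atTop (show 0 < m - 1 by linarith)
      simpa [neg_sub] using this
    have t4 : Tendsto (fun x : ℝ => 1 - Real.exp (-(c * x ^ 2))) atTop (nhds 1) := by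
      simpa using (tendsto_const_nhds (x := (1:ℝ)) (f := atTop)).sub t2
    have t5 := (t4.mul t3).div_const (1 - m)
    simpa using t5
  -- F continuous within Ici 0 at 0
  have hF_cont : ContinuousWithinAt F (Set.Ici 0) 0 := by
    have hF0 : F 0 = 0 := by
      simp [hF, Real.zero_rpow hm0]
    rw [ContinuousWithinAt, hF0]
    apply squeeze_zero_norm' (a := fun x : ℝ => (c / (m - 1)) * x ^ (3 - m))
    · filter_upwards [self_mem_nhdsWithin] with x (hx : 0 ≤ x)
      rcases eq_or_lt_of_le hx with rfl | hx0
      · simp [hF0, Real.zero_rpow (show (3:ℝ) - m ≠ 0 by linarith)]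
      · rw [Real.norm_eq_abs, hF, abs_div, abs_of_neg (show 1 - m < 0 by linarith)]
        have hnum : |(1 - Real.exp (-(c * x ^ 2))) * x ^ (1 - m)| ≤ c * x ^ (3 - m) := by
          rw [abs_mul, abs_of_nonneg (Real.rpow_nonneg hx0.le _)]
          have hexp : Real.exp (-(c * x ^ 2)) ≤ 1 := by
            rw [Real.exp_le_one_iff]; nlinarith
          rw [abs_of_nonneg (by linarith)]
          have h1 : 1 - Real.exp (-(c * x ^ 2)) ≤ c * x ^ 2 := by
            have := Real.add_one_le_exp (-(c * x ^ 2)); linarith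
          calc (1 - Real.exp (-(c * x ^ 2))) * x ^ (1 - m)
              ≤ c * x ^ 2 * x ^ (1 - m) := by
                apply mul_le_mul_of_nonneg_right h1 (Real.rpow_nonneg hx0.le _)
            _ = c * x ^ (3 - m) := by
                rw [mul_assoc, show (x:ℝ) ^ 2 = x ^ ((2:ℕ):ℝ) by rw [Real.rpow_natCast],
                  ← Real.rpow_add hx0]
                congr 1
                push_cast
                ring
        rw [div_eq_mul_inv, mul_comm (c / (m-1)), div_eq_mul_inv c, ← mul_assoc,
          show -(1 - m) = m - 1 by ring,
          show x ^ (3 - m) * c * (m - 1)⁻¹ = c * x ^ (3 - m) * (m - 1)⁻¹ by ring]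
        exact mul_le_mul_of_nonneg_right hnum
          (inv_nonneg.mpr (by linarith))
    · have hcont : ContinuousAt (fun x : ℝ => x ^ (3 - m)) 0 :=
        Real.continuousAt_rpow_const 0 (3 - m) (Or.inr (by linarith))
      have h2 : Tendsto (fun x : ℝ => (c / (m - 1)) * x ^ (3 - m)) (nhdsWithin 0 (Set.Ici 0))
          (nhds ((c / (m - 1)) * (0:ℝ) ^ (3 - m))) :=
        (hcont.tendsto.mono_left (nhdsWithin_le_nhds (s := Set.Ici 0))).const_mul (c / (m - 1))
      simpa [Real.zero_rpow (show (3:ℝ) - m ≠ 0 by linarith)] using h2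
  -- FTC
  have hint : IntegrableOn (fun x => g x + h x) (Set.Ioi 0) := hg_int.add hh_int
  have key : ∫ x in Set.Ioi (0:ℝ), (g x + h x) = 0 - F 0 :=
    MeasureTheory.integral_Ioi_of_hasDerivAt_of_tendsto hF_cont hF_deriv hint hF_top
  have hF0 : F 0 = 0 := by simp [hF, Real.zero_rpow hm0]
  rw [hF0, sub_zero, MeasureTheory.integral_add hg_int hh_int] at key
  -- value of ∫ h
  have hh_val : ∫ x in Set.Ioi (0:ℝ), h x
      = (2 * c / (1 - m)) * (c ^ (-(2 - m + 1) / 2) * (1 / 2) * Real.Gamma ((2 - m + 1) / 2)) := by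
    simp only [hh]
    rw [MeasureTheory.integral_const_mul,
      integral_rpow_mul_exp_neg_mul_rpow two_pos (show (-1:ℝ) < 2 - m by linarith) hc]
  have hgamma : Real.Gamma ((2 - m + 1) / 2) = (1 - m) / 2 * Real.Gamma ((1 - m) / 2) := by
    rw [show (2 - m + 1) / 2 = (1 - m) / 2 + 1 by ring, Real.Gamma_add_one (by
      intro hcontra
      apply hm0
      field_simp at hcontra
      linarith)]
  have hgval : ∫ x in Set.Ioi (0:ℝ), g x
      = -(c ^ ((m - 1) / 2) / 2) * Real.Gamma ((1 - m) / 2) := by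
    have : ∫ x in Set.Ioi (0:ℝ), g x = -∫ x in Set.Ioi (0:ℝ), h x := by linarith
    rw [this, hh_val, hgamma]
    have hcpow : c * c ^ (-(2 - m + 1) / 2) = c ^ ((m - 1) / 2) := by
      rw [show c * c ^ (-(2 - m + 1) / 2) = c ^ (1:ℝ) * c ^ (-(2 - m + 1) / 2) by
        rw [Real.rpow_one], ← Real.rpow_add hc]
      norm_num
      ring_nf
    field_simp
    rw [← hcpow]
    ring
  exact ⟨hg_int, hgval⟩
end

section
/- For every α' ∈ (0,1) and every real τ ≥ 0, the function x ↦ (1 − e^{−x})² e^{−τ x} / x^{1+α'} is Lebesgue integrable on (0,∞) and ∫_0^∞ (1 − e^{−x})² e^{−τ x} / x^{1+α'} dx = (Γ(1−α')/α')·(2(1+τ)^{α'} − τ^{α'} − (2+τ)^{α'}), where Γ is the Gamma function and 0^{α'} := 0. -/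
open MeasureTheory Set Real Filter


lemma aux_gamma_int {α : ℝ} (h0 : 0 < α) (h1 : α < 1) {c : ℝ} (hc : 0 < c) :
    IntegrableOn (fun x : ℝ => x ^ (-α) * Real.exp (-(c * x))) (Set.Ioi 0) ∧
      ∫ x in Set.Ioi (0:ℝ), x ^ (-α) * Real.exp (-(c * x))
        = (1 / c) ^ (1 - α) * Real.Gamma (1 - α) := by
  have hmeas : ∀ s : Set ℝ, AEStronglyMeasurable (fun x : ℝ => x ^ (-α) * Real.exp (-(c * x)))
      (volume.restrict s) := fun s => (by fun_prop : Measurable _).aestronglyMeasurable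
  constructor
  · rw [← Set.Ioc_union_Ioi_eq_Ioi (le_of_lt one_pos)]
    apply IntegrableOn.union
    · have hg : IntegrableOn (fun x : ℝ => x ^ (-α)) (Set.Ioc (0:ℝ) 1) := by
        have := intervalIntegral.intervalIntegrable_rpow' (a := (0:ℝ)) (b := 1) (r := -α)
          (by linarith)
        rwa [intervalIntegrable_iff_integrableOn_Ioc_of_le (by norm_num)] at this
      refine MeasureTheory.Integrable.mono hg (hmeas _) ?_
      filter_upwards [ae_restrict_mem measurableSet_Ioc] with x hx
      have hx0 : (0:ℝ) < x := hx.1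
      have h1' : Real.exp (-(c * x)) ≤ 1 := by
        rw [Real.exp_le_one_iff]; nlinarith
      rw [Real.norm_eq_abs, Real.norm_eq_abs, abs_of_nonneg (by positivity),
        abs_of_nonneg (by positivity : (0:ℝ) ≤ x ^ (-α))]
      nlinarith [Real.rpow_pos_of_pos hx0 (-α), Real.exp_pos (-(c*x))]
    · refine MeasureTheory.Integrable.mono (exp_neg_integrableOn_Ioi 1 hc) (hmeas _) ?_
      filter_upwards [ae_restrict_mem measurableSet_Ioi] with x hx
      have hx1 : (1:ℝ) ≤ x := le_of_lt hx
      have hle : x ^ (-α) ≤ 1 := Real.rpow_le_one_of_one_le_of_nonpos hx1 (by linarith)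
      rw [Real.norm_eq_abs, Real.norm_eq_abs, abs_of_nonneg (by positivity),
        abs_of_nonneg (Real.exp_pos _).le, neg_mul]
      nlinarith [Real.exp_pos (-(c*x)), Real.rpow_pos_of_pos (lt_trans one_pos hx) (-α)]
  · have := Real.integral_rpow_mul_exp_neg_mul_Ioi (a := 1 - α) (r := c) (by linarith) hc
    simpa [show (1:ℝ) - α - 1 = -α by ring] using this

-- the multiplied version
lemma aux_gamma_int' {α : ℝ} (h0 : 0 < α) (h1 : α < 1) {c : ℝ} (hc : 0 ≤ c) :
    IntegrableOn (fun x : ℝ => c * (x ^ (-α) * Real.exp (-(c * x)))) (Set.Ioi 0) ∧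
      ∫ x in Set.Ioi (0:ℝ), c * (x ^ (-α) * Real.exp (-(c * x)))
        = c ^ α * Real.Gamma (1 - α) := by
  rcases eq_or_lt_of_le hc with rfl | hc'
  · simp [Real.zero_rpow h0.ne']
  · obtain ⟨hi, hv⟩ := aux_gamma_int h0 h1 hc'
    refine ⟨hi.const_mul c, ?_⟩
    rw [integral_const_mul, hv]
    have hcc : c * ((1/c) ^ (1-α)) = c ^ α := by
      calc c * (1/c) ^ (1-α) = c ^ (1:ℝ) * c ^ (-(1-α)) := by
            rw [one_div, Real.inv_rpow hc'.le, ← Real.rpow_neg hc'.le, Real.rpow_one]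
        _ = c ^ ((1:ℝ) + -(1-α)) := (Real.rpow_add hc' _ _).symm
        _ = c ^ α := by ring_nf
    rw [← mul_assoc, hcc]

lemma aux_bounds {a b x : ℝ} (ha : 0 ≤ a) (hab : a ≤ b) (hx : 0 < x) :
    0 ≤ Real.exp (-(a*x)) - Real.exp (-(b*x)) ∧
    Real.exp (-(a*x)) - Real.exp (-(b*x)) ≤ (b-a)*x ∧
    Real.exp (-(a*x)) - Real.exp (-(b*x)) ≤ 1 := by
  have h1 : Real.exp (-(b*x)) ≤ Real.exp (-(a*x)) := Real.exp_le_exp.mpr (by nlinarith)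
  have h2 : Real.exp (-(a*x)) ≤ 1 := by rw [Real.exp_le_one_iff]; nlinarith
  have h3 : Real.exp (-(b*x)) = Real.exp (-(a*x)) * Real.exp (-((b-a)*x)) := by
    rw [← Real.exp_add]; ring_nf
  have h4 : 1 - (b-a)*x ≤ Real.exp (-((b-a)*x)) := by
    have := Real.add_one_le_exp (-((b-a)*x)); linarith
  have h5 : Real.exp (-((b-a)*x)) ≤ 1 := by rw [Real.exp_le_one_iff]; nlinarith
  refine ⟨by linarith, ?_, by nlinarith [Real.exp_pos (-(b*x))]⟩
  nlinarith [Real.exp_pos (-(a*x))]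

lemma aux_key_int {α : ℝ} (h0 : 0 < α) (h1 : α < 1) {a b : ℝ}
    (ha : 0 ≤ a) (hab : a ≤ b) :
    IntegrableOn (fun x : ℝ => (Real.exp (-(a * x)) - Real.exp (-(b * x))) / x ^ (1 + α))
      (Set.Ioi 0) := by
  have hmeas : ∀ s : Set ℝ,
      AEStronglyMeasurable
        (fun x : ℝ => (Real.exp (-(a * x)) - Real.exp (-(b * x))) / x ^ (1 + α))
        (volume.restrict s) := fun s => (by fun_prop : Measurable _).aestronglyMeasurable
  rw [← Set.Ioc_union_Ioi_eq_Ioi (le_of_lt one_pos)]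
  apply IntegrableOn.union
  · have hg : IntegrableOn (fun x : ℝ => (b-a) * x ^ (-α)) (Set.Ioc (0:ℝ) 1) := by
      have := intervalIntegral.intervalIntegrable_rpow' (a := (0:ℝ)) (b := 1) (r := -α)
        (by linarith)
      rw [intervalIntegrable_iff_integrableOn_Ioc_of_le (by norm_num)] at this
      exact this.const_mul _
    refine MeasureTheory.Integrable.mono hg (hmeas _) ?_
    filter_upwards [ae_restrict_mem measurableSet_Ioc] with x hx
    have hx0 : (0:ℝ) < x := hx.1
    obtain ⟨hB0, hB1, _⟩ := aux_bounds ha hab hx0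
    have hd : (0:ℝ) < x ^ (1 + α) := Real.rpow_pos_of_pos hx0 _
    have hxx : x / x ^ (1 + α) = x ^ (-α) := by
      rw [show x / x ^ (1+α) = x ^ (1:ℝ) / x ^ (1+α) by rw [Real.rpow_one],
        ← Real.rpow_sub hx0]
      norm_num
    rw [Real.norm_eq_abs, Real.norm_eq_abs, abs_of_nonneg (div_nonneg hB0 hd.le),
      abs_of_nonneg (mul_nonneg (by linarith) (Real.rpow_pos_of_pos hx0 _).le)]
    calc (Real.exp (-(a*x)) - Real.exp (-(b*x))) / x ^ (1+α)
        ≤ ((b-a)*x) / x ^ (1+α) := by gcongr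
      _ = (b-a) * (x / x ^ (1+α)) := by ring
      _ = (b-a) * x ^ (-α) := by rw [hxx]
  · have hg : IntegrableOn (fun x : ℝ => x ^ (-(1+α))) (Set.Ioi (1:ℝ)) :=
      integrableOn_Ioi_rpow_of_lt (by linarith) one_pos
    refine MeasureTheory.Integrable.mono hg (hmeas _) ?_
    filter_upwards [ae_restrict_mem measurableSet_Ioi] with x hx
    have hx0 : (0:ℝ) < x := lt_trans one_pos hx
    obtain ⟨hB0, _, hB2⟩ := aux_bounds ha hab hx0
    have hd : (0:ℝ) < x ^ (1 + α) := Real.rpow_pos_of_pos hx0 _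
    rw [Real.norm_eq_abs, Real.norm_eq_abs, abs_of_nonneg (div_nonneg hB0 hd.le),
      abs_of_nonneg (Real.rpow_pos_of_pos hx0 _).le, Real.rpow_neg hx0.le]
    calc (Real.exp (-(a*x)) - Real.exp (-(b*x))) / x ^ (1+α)
        ≤ 1 / x ^ (1+α) := by gcongr
      _ = (x ^ (1+α))⁻¹ := one_div _

lemma aux_key {α : ℝ} (h0 : 0 < α) (h1 : α < 1) {a b : ℝ}
    (ha : 0 ≤ a) (hab : a ≤ b) :
    ∫ x in Set.Ioi (0:ℝ), (Real.exp (-(a * x)) - Real.exp (-(b * x))) / x ^ (1 + α)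
      = Real.Gamma (1 - α) / α * (b ^ α - a ^ α) := by
  have hb : 0 ≤ b := le_trans ha hab
  set f : ℝ → ℝ := fun x => (Real.exp (-(a * x)) - Real.exp (-(b * x))) / x ^ (1 + α) with hf
  set φ : ℝ → ℝ := fun x => (1/α) * (b * (x ^ (-α) * Real.exp (-(b*x)))
      - a * (x ^ (-α) * Real.exp (-(a*x)))) with hφ
  set F : ℝ → ℝ := fun x => -(1/α) * (x ^ (-α) * (Real.exp (-(a*x)) - Real.exp (-(b*x)))) with hFdef
  have hA := aux_gamma_int' h0 h1 ha
  have hB := aux_gamma_int' h0 h1 hb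
  have hφint : IntegrableOn φ (Set.Ioi 0) := ((hB.1.sub hA.1).const_mul (1/α))
  have hfint : IntegrableOn f (Set.Ioi 0) := aux_key_int h0 h1 ha hab
  have hF'int : IntegrableOn (fun x => f x - φ x) (Set.Ioi 0) := hfint.sub hφint
  -- derivative
  have hderiv : ∀ x ∈ Set.Ioi (0:ℝ), HasDerivAt F (f x - φ x) x := by
    intro x hx
    have hx0 : (0:ℝ) < x := hx
    have hp : HasDerivAt (fun y : ℝ => y ^ (-α)) (-α * x ^ (-α - 1)) x :=
      Real.hasDerivAt_rpow_const (Or.inl hx0.ne')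
    have hea : HasDerivAt (fun y : ℝ => Real.exp (-(a*y))) (Real.exp (-(a*x)) * (-a)) x := by
      have := (((hasDerivAt_id x).const_mul a).neg).exp
      simpa using this
    have heb : HasDerivAt (fun y : ℝ => Real.exp (-(b*y))) (Real.exp (-(b*x)) * (-b)) x := by
      have := (((hasDerivAt_id x).const_mul b).neg).exp
      simpa using this
    have h := ((hp.mul (hea.sub heb)).const_mul (-(1/α)))
    refine h.congr_deriv ?_
    have e1 : x ^ (-α-1) = (x ^ (1+α))⁻¹ := by
      rw [show -α-1 = -(1+α) by ring, Real.rpow_neg hx0.le]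
    have e2 : x ^ (1+α) ≠ 0 := (Real.rpow_pos_of_pos hx0 _).ne'
    simp only [hf, hφ, Pi.sub_apply]
    rw [e1, div_eq_mul_inv]
    field_simp
    ring
  -- continuity at 0
  have hF0 : F 0 = 0 := by simp [hFdef, Real.zero_rpow h0.ne']
  have hcont : ContinuousWithinAt F (Set.Ici 0) 0 := by
    rw [ContinuousWithinAt, hF0]
    apply squeeze_zero_norm' (a := fun x : ℝ => (1/α) * ((b-a) * x ^ (1-α)))
    · filter_upwards [self_mem_nhdsWithin] with x (hx : x ∈ Set.Ici (0:ℝ))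
      rcases eq_or_lt_of_le (Set.mem_Ici.mp hx) with rfl | hx0
      · simp [hF0, Real.zero_rpow (by linarith : (1:ℝ) - α ≠ 0)]
      · obtain ⟨hB0, hB1, _⟩ := aux_bounds ha hab hx0
        have hxa : (0:ℝ) ≤ x ^ (-α) := (Real.rpow_pos_of_pos hx0 _).le
        have hxx : x ^ (-α) * x = x ^ (1-α) := by
          rw [show (1:ℝ)-α = -α + 1 by ring, Real.rpow_add hx0, Real.rpow_one]
        rw [hFdef]
        rw [Real.norm_eq_abs, abs_mul, abs_mul, abs_of_nonpos (neg_nonpos.mpr (by positivity)),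
          abs_of_nonneg hxa, abs_of_nonneg hB0]
        rw [neg_neg, ← hxx]
        have h1α : (0:ℝ) < 1/α := by positivity
        calc 1/α * (x ^ (-α) * (Real.exp (-(a*x)) - Real.exp (-(b*x))))
            ≤ 1/α * (x ^ (-α) * ((b-a)*x)) := by gcongr
          _ = 1/α * ((b-a) * (x ^ (-α) * x)) := by ring
    · have hlim : Tendsto (fun x : ℝ => x ^ (1-α)) (nhds 0) (nhds ((0:ℝ) ^ (1-α))) :=
        (Real.continuousAt_rpow_const 0 (1-α) (Or.inr (by linarith))).tendsto
      rw [Real.zero_rpow (by linarith : (1:ℝ) - α ≠ 0)] at hlim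
      have h2 : Tendsto (fun x : ℝ => x ^ (1-α)) (nhdsWithin 0 (Set.Ici 0)) (nhds 0) :=
        hlim.mono_left nhdsWithin_le_nhds
      have := (h2.const_mul (b-a)).const_mul (1/α)
      simpa using this
  -- limit at top
  have htop : Tendsto F atTop (nhds 0) := by
    apply squeeze_zero_norm' (a := fun x : ℝ => (1/α) * x ^ (-α))
    · filter_upwards [eventually_gt_atTop 0] with x hx0
      obtain ⟨hB0, _, hB2⟩ := aux_bounds ha hab hx0
      have hxa : (0:ℝ) ≤ x ^ (-α) := (Real.rpow_pos_of_pos hx0 _).le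
      rw [hFdef, Real.norm_eq_abs, abs_mul, abs_mul, abs_of_nonpos (neg_nonpos.mpr (by positivity)),
        abs_of_nonneg hxa, abs_of_nonneg hB0, neg_neg]
      have h1α : (0:ℝ) < 1/α := by positivity
      calc 1/α * (x ^ (-α) * (Real.exp (-(a*x)) - Real.exp (-(b*x))))
          ≤ 1/α * (x ^ (-α) * 1) := by gcongr
        _ = 1/α * x ^ (-α) := by ring
    · have := (tendsto_rpow_neg_atTop h0).const_mul (1/α)
      simpa using this
  have hFTC : ∫ x in Set.Ioi (0:ℝ), (f x - φ x) = 0 - F 0 :=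
    MeasureTheory.integral_Ioi_of_hasDerivAt_of_tendsto hcont hderiv hF'int htop
  rw [hF0, sub_zero] at hFTC
  have hsplit : ∫ x in Set.Ioi (0:ℝ), f x
      = (∫ x in Set.Ioi (0:ℝ), (f x - φ x)) + ∫ x in Set.Ioi (0:ℝ), φ x := by
    rw [← MeasureTheory.integral_add hF'int hφint]
    simp
  rw [hsplit, hFTC, zero_add, hφ]
  have : ∫ x in Set.Ioi (0:ℝ), (1/α) * (b * (x ^ (-α) * Real.exp (-(b*x)))
      - a * (x ^ (-α) * Real.exp (-(a*x))))
      = (1/α) * ((b ^ α * Real.Gamma (1-α)) - (a ^ α * Real.Gamma (1-α))) := by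
    rw [integral_const_mul, MeasureTheory.integral_sub hB.1 hA.1, hB.2, hA.2]
  rw [this]; ring



open MeasureTheory

/-- for `α' ∈ (0,1)` and `τ ≥ 0`, the function
`x ↦ (1 − e^{−x})² e^{−τx}/x^{1+α'}` is Lebesgue integrable on `(0,∞)` and
`∫_0^∞ (1 − e^{−x})² e^{−τx}/x^{1+α'} dx = (Γ(1−α')/α')(2(1+τ)^{α'} − τ^{α'} − (2+τ)^{α'})`
(with `0^{α'} = 0`, which is the convention of `Real.rpow`). -/
theorem stmt8 (α' τ : ℝ) (h0 : 0 < α') (h1 : α' < 1) (hτ : 0 ≤ τ) :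
    IntegrableOn
        (fun x : ℝ => (1 - Real.exp (-x)) ^ 2 * Real.exp (-(τ * x)) / x ^ (1 + α'))
        (Set.Ioi 0) ∧
      ∫ x in Set.Ioi (0 : ℝ), (1 - Real.exp (-x)) ^ 2 * Real.exp (-(τ * x)) / x ^ (1 + α') =
        Real.Gamma (1 - α') / α' * (2 * (1 + τ) ^ α' - τ ^ α' - (2 + τ) ^ α') := by
  have h12 : τ ≤ τ + 1 := by linarith
  have h23 : τ + 1 ≤ τ + 2 := by linarith
  have hτ1 : (0:ℝ) ≤ τ + 1 := by linarith
  have hk1 := aux_key_int h0 h1 hτ h12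
  have hk2 := aux_key_int h0 h1 hτ1 h23
  have hv1 := aux_key h0 h1 hτ h12
  have hv2 := aux_key h0 h1 hτ1 h23
  have hfun : (fun x : ℝ => (1 - Real.exp (-x)) ^ 2 * Real.exp (-(τ * x)) / x ^ (1 + α'))
      = fun x : ℝ => (Real.exp (-(τ * x)) - Real.exp (-((τ+1) * x))) / x ^ (1 + α')
        - (Real.exp (-((τ+1) * x)) - Real.exp (-((τ+2) * x))) / x ^ (1 + α') := by
    funext x
    rw [div_sub_div_same]
    congr 1
    rw [show -((τ+1)*x) = -(τ*x) + -x by ring, show -((τ+2)*x) = -(τ*x) + (-x + -x) by ring,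
      Real.exp_add, Real.exp_add, Real.exp_add]
    ring
  rw [hfun]
  refine ⟨hk1.sub hk2, ?_⟩
  rw [MeasureTheory.integral_sub hk1 hk2, hv1, hv2]
  rw [show (1:ℝ) + τ = τ + 1 by ring, show (2:ℝ) + τ = τ + 2 by ring]
  ring
end

section
/- Let α' ∈ (0,1) and α := d/2 − 1 + α'. The function f_α is twice continuously differentiable on (0,∞) and satisfies: ∫_0^∞ x^{d−1}|f_α(x²)| dx < ∞, ∫_1^∞ x^{d}|f_α'(x²)| dx < ∞, ∫_1^∞ x^{d+1}|f_α''(x²)| dx < ∞, and the limits superior as x → 0⁺ of x^{2α}|f_α(x²)|, of x^{2(1+α)}|f_α'(x²)|, and of x^{2(2+α)}|f_α''(x²)| are all finite. -/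
open MeasureTheory

namespace Stmt12Aux
open Real Set Filter

lemma exp_neg_le_one' (t : ℝ) (ht : 0 ≤ t) : Real.exp (-t) ≤ 1 := by
  rw [Real.exp_le_one_iff]; linarith

lemma one_sub_exp_nonneg (t : ℝ) (ht : 0 ≤ t) : 0 ≤ 1 - Real.exp (-t) := by
  linarith [exp_neg_le_one' t ht]

lemma one_sub_exp_le (t : ℝ) : 1 - Real.exp (-t) ≤ t := by
  linarith [Real.add_one_le_exp (-t)]

lemma exp_neg_le_inv (t : ℝ) (ht : 0 < t) : Real.exp (-t) ≤ t⁻¹ := by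
  rw [Real.exp_neg]
  apply inv_anti₀ ht
  linarith [Real.add_one_le_exp t]

lemma self_mul_rpow (t p : ℝ) (ht : 0 < t) : t * t ^ p = t ^ (1 + p) := by
  nth_rewrite 1 [← Real.rpow_one t]
  rw [← Real.rpow_add ht]

lemma inv_mul_rpow (t p : ℝ) (ht : 0 < t) : t⁻¹ * t ^ p = t ^ (-1 + p) := by
  nth_rewrite 1 [← Real.rpow_neg_one t]
  rw [← Real.rpow_add ht]

lemma sq_rpow (x p : ℝ) (hx : 0 ≤ x) : (x ^ 2) ^ p = x ^ (2 * p) := by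
  rw [← Real.rpow_natCast x 2, ← Real.rpow_mul hx]
  norm_num

noncomputable def G1 (α x : ℝ) : ℝ :=
  Real.exp (-x) * x ^ (-(1+α)) - (1+α) * ((1 - Real.exp (-x)) * x ^ (-(2+α)))

noncomputable def G2 (α x : ℝ) : ℝ :=
  -(Real.exp (-x) * x ^ (-(1+α))) - 2*(1+α) * (Real.exp (-x) * x ^ (-(2+α)))
    + (1+α)*(2+α) * ((1 - Real.exp (-x)) * x ^ (-(3+α)))

lemma hd_rpow (c x : ℝ) (hx : 0 < x) : HasDerivAt (fun y : ℝ => y ^ c) (c * x ^ (c-1)) x :=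
  Real.hasDerivAt_rpow_const (Or.inl hx.ne')

lemma hd_exp_neg (x : ℝ) : HasDerivAt (fun y : ℝ => Real.exp (-y)) (-Real.exp (-x)) x := by
  have h := (Real.hasDerivAt_exp (-x)).comp x (hasDerivAt_neg x)
  simpa [mul_comm, Function.comp_def] using h

lemma hd_one_sub_exp (x : ℝ) : HasDerivAt (fun y : ℝ => 1 - Real.exp (-y)) (Real.exp (-x)) x := by
  simpa [Pi.sub_def] using (hasDerivAt_const x (1:ℝ)).sub (hd_exp_neg x)

lemma F_hasDerivAt (α x : ℝ) (hx : 0 < x) :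
    HasDerivAt (fun y : ℝ => (1 - Real.exp (-y)) * y ^ (-(1+α))) (G1 α x) x := by
  have h := (hd_one_sub_exp x).mul (hd_rpow (-(1+α)) x hx)
  refine h.congr_deriv ?_
  unfold G1
  rw [show -(2+α) = -(1+α) - 1 by ring]
  ring

lemma G1_hasDerivAt (α x : ℝ) (hx : 0 < x) : HasDerivAt (G1 α) (G2 α x) x := by
  have h1 := (hd_exp_neg x).mul (hd_rpow (-(1+α)) x hx)
  have h2 := ((hd_one_sub_exp x).mul (hd_rpow (-(2+α)) x hx)).const_mul (1+α)
  have h := h1.sub h2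
  have h' : HasDerivAt (G1 α)
      (-Real.exp (-x) * x ^ (-(1+α)) + Real.exp (-x) * (-(1+α) * x ^ (-(1+α)-1)) -
        (1+α) * (Real.exp (-x) * x ^ (-(2+α)) + (1 - Real.exp (-x)) * (-(2+α) * x ^ (-(2+α)-1)))) x := h
  convert h' using 1
  unfold G2
  rw [show -(2+α) = -(1+α) - 1 by ring, show -(3+α) = -(1+α)-1-1 by ring]
  ring

lemma absf_le1 (α t : ℝ) (ht : 0 < t) :
    |(1 - Real.exp (-t)) / t ^ (1+α)| ≤ t ^ (-α) := by
  rw [abs_div, abs_of_nonneg (one_sub_exp_nonneg t ht.le),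
    abs_of_nonneg (Real.rpow_nonneg ht.le _), div_le_iff₀ (Real.rpow_pos_of_pos ht _)]
  calc 1 - Real.exp (-t) ≤ t := one_sub_exp_le t
    _ = t ^ (-α) * t ^ (1+α) := by
        rw [← Real.rpow_add ht, show -α + (1+α) = 1 by ring, Real.rpow_one]

lemma absf_le2 (α t : ℝ) (ht : 0 < t) :
    |(1 - Real.exp (-t)) / t ^ (1+α)| ≤ t ^ (-(1+α)) := by
  rw [abs_div, abs_of_nonneg (one_sub_exp_nonneg t ht.le),
    abs_of_nonneg (Real.rpow_nonneg ht.le _), div_le_iff₀ (Real.rpow_pos_of_pos ht _),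
    ← Real.rpow_add ht, show -(1+α) + (1+α) = 0 by ring, Real.rpow_zero]
  linarith [Real.exp_pos (-t)]

lemma absG1_le (α t : ℝ) (hα : 0 < α) (ht : 0 < t) :
    |G1 α t| ≤ (2+α) * t ^ (-(1+α)) := by
  have r1 : (0:ℝ) ≤ t ^ (-(1+α)) := Real.rpow_nonneg ht.le _
  have r2 : (0:ℝ) ≤ t ^ (-(2+α)) := Real.rpow_nonneg ht.le _
  have e1 : |Real.exp (-t) * t ^ (-(1+α))| ≤ 1 * t ^ (-(1+α)) := by
    rw [abs_of_nonneg (mul_nonneg (Real.exp_nonneg _) r1)]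
    exact mul_le_mul_of_nonneg_right (exp_neg_le_one' t ht.le) r1
  have e2 : |(1+α) * ((1 - Real.exp (-t)) * t ^ (-(2+α)))| ≤ (1+α) * (t * t ^ (-(2+α))) := by
    rw [abs_of_nonneg (mul_nonneg (by linarith) (mul_nonneg (one_sub_exp_nonneg t ht.le) r2))]
    exact mul_le_mul_of_nonneg_left
      (mul_le_mul_of_nonneg_right (one_sub_exp_le t) r2) (by linarith)
  rw [self_mul_rpow t _ ht, show 1 + -(2+α) = -(1+α) by ring] at e2
  calc |G1 α t| ≤ _ + _ := abs_sub _ _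
    _ ≤ (2+α) * t ^ (-(1+α)) := by linarith

lemma absG1_le' (α t : ℝ) (hα : 0 < α) (ht : 1 ≤ t) :
    |G1 α t| ≤ Real.exp (-t) + (1+α) * t ^ (-(2+α)) := by
  have ht0 : (0:ℝ) < t := lt_of_lt_of_le one_pos ht
  have r1 : (0:ℝ) ≤ t ^ (-(1+α)) := Real.rpow_nonneg ht0.le _
  have r2 : (0:ℝ) ≤ t ^ (-(2+α)) := Real.rpow_nonneg ht0.le _
  have e1 : |Real.exp (-t) * t ^ (-(1+α))| ≤ Real.exp (-t) * 1 := by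
    rw [abs_of_nonneg (mul_nonneg (Real.exp_nonneg _) r1)]
    exact mul_le_mul_of_nonneg_left
      (Real.rpow_le_one_of_one_le_of_nonpos ht (by linarith)) (Real.exp_nonneg _)
  have e2 : |(1+α) * ((1 - Real.exp (-t)) * t ^ (-(2+α)))| ≤ (1+α) * (1 * t ^ (-(2+α))) := by
    rw [abs_of_nonneg (mul_nonneg (by linarith) (mul_nonneg (one_sub_exp_nonneg t ht0.le) r2))]
    refine mul_le_mul_of_nonneg_left (mul_le_mul_of_nonneg_right ?_ r2) (by linarith)
    linarith [Real.exp_pos (-t)]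
  calc |G1 α t| ≤ _ + _ := abs_sub _ _
    _ ≤ _ := by nlinarith

lemma absG2_le (α t : ℝ) (hα : 0 < α) (ht : 0 < t) :
    |G2 α t| ≤ (1 + 2*(1+α) + (1+α)*(2+α)) * t ^ (-(2+α)) := by
  have r1 : (0:ℝ) ≤ t ^ (-(1+α)) := Real.rpow_nonneg ht.le _
  have r2 : (0:ℝ) ≤ t ^ (-(2+α)) := Real.rpow_nonneg ht.le _
  have r3 : (0:ℝ) ≤ t ^ (-(3+α)) := Real.rpow_nonneg ht.le _
  have e1 : |(-(Real.exp (-t) * t ^ (-(1+α))))| ≤ t⁻¹ * t ^ (-(1+α)) := by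
    rw [abs_neg, abs_of_nonneg (mul_nonneg (Real.exp_nonneg _) r1)]
    exact mul_le_mul_of_nonneg_right (exp_neg_le_inv t ht) r1
  rw [inv_mul_rpow t _ ht, show -1 + -(1+α) = -(2+α) by ring] at e1
  have e2 : |2*(1+α) * (Real.exp (-t) * t ^ (-(2+α)))| ≤ 2*(1+α) * (1 * t ^ (-(2+α))) := by
    rw [abs_of_nonneg (mul_nonneg (by linarith) (mul_nonneg (Real.exp_nonneg _) r2))]
    exact mul_le_mul_of_nonneg_left
      (mul_le_mul_of_nonneg_right (exp_neg_le_one' t ht.le) r2) (by linarith)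
  have e3 : |(1+α)*(2+α) * ((1 - Real.exp (-t)) * t ^ (-(3+α)))|
      ≤ (1+α)*(2+α) * (t * t ^ (-(3+α))) := by
    rw [abs_of_nonneg (mul_nonneg (by nlinarith) (mul_nonneg (one_sub_exp_nonneg t ht.le) r3))]
    exact mul_le_mul_of_nonneg_left
      (mul_le_mul_of_nonneg_right (one_sub_exp_le t) r3) (by nlinarith)
  rw [self_mul_rpow t _ ht, show 1 + -(3+α) = -(2+α) by ring] at e3
  have habs : |G2 α t| ≤ |(-(Real.exp (-t) * t ^ (-(1+α))))|
      + |2*(1+α) * (Real.exp (-t) * t ^ (-(2+α)))|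
      + |(1+α)*(2+α) * ((1 - Real.exp (-t)) * t ^ (-(3+α)))| := by
    unfold G2
    calc |_ - _ + _| ≤ |(-(Real.exp (-t) * t ^ (-(1+α)))) - 2*(1+α) * (Real.exp (-t) * t ^ (-(2+α)))|
          + |(1+α)*(2+α) * ((1 - Real.exp (-t)) * t ^ (-(3+α)))| := abs_add_le _ _
      _ ≤ _ := by
          linarith [abs_sub (-(Real.exp (-t) * t ^ (-(1+α)))) (2*(1+α) * (Real.exp (-t) * t ^ (-(2+α))))]
  nlinarith

lemma absG2_le' (α t : ℝ) (hα : 0 < α) (ht : 1 ≤ t) :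
    |G2 α t| ≤ (1 + 2*(1+α)) * Real.exp (-t) + (1+α)*(2+α) * t ^ (-(3+α)) := by
  have ht0 : (0:ℝ) < t := lt_of_lt_of_le one_pos ht
  have r1 : (0:ℝ) ≤ t ^ (-(1+α)) := Real.rpow_nonneg ht0.le _
  have r2 : (0:ℝ) ≤ t ^ (-(2+α)) := Real.rpow_nonneg ht0.le _
  have r3 : (0:ℝ) ≤ t ^ (-(3+α)) := Real.rpow_nonneg ht0.le _
  have e1 : |(-(Real.exp (-t) * t ^ (-(1+α))))| ≤ Real.exp (-t) * 1 := by
    rw [abs_neg, abs_of_nonneg (mul_nonneg (Real.exp_nonneg _) r1)]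
    exact mul_le_mul_of_nonneg_left
      (Real.rpow_le_one_of_one_le_of_nonpos ht (by linarith)) (Real.exp_nonneg _)
  have e2 : |2*(1+α) * (Real.exp (-t) * t ^ (-(2+α)))| ≤ 2*(1+α) * (Real.exp (-t) * 1) := by
    rw [abs_of_nonneg (mul_nonneg (by linarith) (mul_nonneg (Real.exp_nonneg _) r2))]
    exact mul_le_mul_of_nonneg_left (mul_le_mul_of_nonneg_left
      (Real.rpow_le_one_of_one_le_of_nonpos ht (by linarith)) (Real.exp_nonneg _)) (by linarith)
  have e3 : |(1+α)*(2+α) * ((1 - Real.exp (-t)) * t ^ (-(3+α)))|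
      ≤ (1+α)*(2+α) * (1 * t ^ (-(3+α))) := by
    rw [abs_of_nonneg (mul_nonneg (by nlinarith) (mul_nonneg (one_sub_exp_nonneg t ht0.le) r3))]
    refine mul_le_mul_of_nonneg_left (mul_le_mul_of_nonneg_right ?_ r3) (by nlinarith)
    linarith [Real.exp_pos (-t)]
  have habs : |G2 α t| ≤ |(-(Real.exp (-t) * t ^ (-(1+α))))|
      + |2*(1+α) * (Real.exp (-t) * t ^ (-(2+α)))|
      + |(1+α)*(2+α) * ((1 - Real.exp (-t)) * t ^ (-(3+α)))| := by
    unfold G2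
    calc |_ - _ + _| ≤ |(-(Real.exp (-t) * t ^ (-(1+α)))) - 2*(1+α) * (Real.exp (-t) * t ^ (-(2+α)))|
          + |(1+α)*(2+α) * ((1 - Real.exp (-t)) * t ^ (-(3+α)))| := abs_add_le _ _
      _ ≤ _ := by
          linarith [abs_sub (-(Real.exp (-t) * t ^ (-(1+α)))) (2*(1+α) * (Real.exp (-t) * t ^ (-(2+α))))]
  nlinarith

lemma contOn_G1 (α : ℝ) : ContinuousOn (G1 α) (Ioi (0:ℝ)) := by
  have he : ContinuousOn (fun x : ℝ => Real.exp (-x)) (Ioi (0:ℝ)) :=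
    (Real.continuous_exp.comp continuous_neg).continuousOn
  have hr : ∀ p : ℝ, ContinuousOn (fun x : ℝ => x ^ p) (Ioi (0:ℝ)) := fun p x hx =>
    (Real.continuousAt_rpow_const x p (Or.inl (ne_of_gt hx))).continuousWithinAt
  unfold G1
  exact (he.mul (hr _)).sub (continuousOn_const.mul ((continuousOn_const.sub he).mul (hr _)))

lemma contOn_G2 (α : ℝ) : ContinuousOn (G2 α) (Ioi (0:ℝ)) := by
  have he : ContinuousOn (fun x : ℝ => Real.exp (-x)) (Ioi (0:ℝ)) :=
    (Real.continuous_exp.comp continuous_neg).continuousOn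
  have hr : ∀ p : ℝ, ContinuousOn (fun x : ℝ => x ^ p) (Ioi (0:ℝ)) := fun p x hx =>
    (Real.continuousAt_rpow_const x p (Or.inl (ne_of_gt hx))).continuousWithinAt
  unfold G2
  exact (((he.mul (hr _)).neg.sub (continuousOn_const.mul (he.mul (hr _)))).add
    (continuousOn_const.mul ((continuousOn_const.sub he).mul (hr _))))

lemma integrable_pow_exp (n : ℕ) :
    IntegrableOn (fun x : ℝ => x ^ n * Real.exp (-x)) (Ioi (1:ℝ)) volume := by
  have h := Real.GammaIntegral_convergent (s := (n:ℝ)+1) (by positivity)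
  have h2 := h.mono_set (Set.Ioi_subset_Ioi zero_le_one)
  refine h2.congr_fun (fun x hx => ?_) measurableSet_Ioi
  dsimp only
  rw [show (n:ℝ)+1-1 = (n:ℝ) by ring, Real.rpow_natCast, mul_comm]

end Stmt12Aux

/-- membership of `f_α(x) = (1−e^{−x})/x^{1+α}`, `α = d/2 − 1 + α'`, in the
class `𝒬_β` with `β = (2α, 2(1+α), 2(2+α))`: `f_α` is `C²` on `(0,∞)`, the weighted
integrability conditions hold, and the stated `limsup`s at `0⁺` are finite
(expressed as eventual boundedness along `𝓝[>] 0`). -/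
theorem stmt12 (d : ℕ) (hd : 2 ≤ d) (α' α : ℝ) (h0 : 0 < α') (h1 : α' < 1)
    (hα : α = (d : ℝ) / 2 - 1 + α') (f : ℝ → ℝ)
    (hf : f = fun x : ℝ => (1 - Real.exp (-x)) / x ^ (1 + α)) :
    ContDiffOn ℝ 2 f (Set.Ioi 0) ∧
      IntegrableOn (fun x : ℝ => x ^ (d - 1) * |f (x ^ 2)|) (Set.Ioi 0) ∧
      IntegrableOn (fun x : ℝ => x ^ d * |deriv f (x ^ 2)|) (Set.Ioi 1) ∧
      IntegrableOn (fun x : ℝ => x ^ (d + 1) * |deriv (deriv f) (x ^ 2)|) (Set.Ioi 1) ∧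
      Filter.IsBoundedUnder (· ≤ ·) (nhdsWithin 0 (Set.Ioi 0))
        (fun x : ℝ => x ^ (2 * α) * |f (x ^ 2)|) ∧
      Filter.IsBoundedUnder (· ≤ ·) (nhdsWithin 0 (Set.Ioi 0))
        (fun x : ℝ => x ^ (2 * (1 + α)) * |deriv f (x ^ 2)|) ∧
      Filter.IsBoundedUnder (· ≤ ·) (nhdsWithin 0 (Set.Ioi 0))
        (fun x : ℝ => x ^ (2 * (2 + α)) * |deriv (deriv f) (x ^ 2)|) := by
  have hdR : (2:ℝ) ≤ (d:ℝ) := by exact_mod_cast hd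
  have hα0 : 0 < α := by rw [hα]; linarith
  -- basic pointwise description of f
  have hfx : ∀ t : ℝ, f t = (1 - Real.exp (-t)) / t ^ (1 + α) := fun t => by rw [hf]
  -- derivative facts
  have hDf : ∀ y : ℝ, 0 < y → HasDerivAt f (Stmt12Aux.G1 α y) y := by
    intro y hy
    refine (Stmt12Aux.F_hasDerivAt α y hy).congr_of_eventuallyEq ?_
    filter_upwards [isOpen_Ioi.mem_nhds hy] with z hz
    rw [hfx z, Real.rpow_neg (le_of_lt hz), div_eq_mul_inv]
  have hderiv1 : ∀ y : ℝ, 0 < y → deriv f y = Stmt12Aux.G1 α y := fun y hy => (hDf y hy).deriv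
  have hDDf : ∀ y : ℝ, 0 < y → HasDerivAt (deriv f) (Stmt12Aux.G2 α y) y := by
    intro y hy
    refine (Stmt12Aux.G1_hasDerivAt α y hy).congr_of_eventuallyEq ?_
    filter_upwards [isOpen_Ioi.mem_nhds hy] with z hz
    exact hderiv1 z hz
  have hderiv2 : ∀ y : ℝ, 0 < y → deriv (deriv f) y = Stmt12Aux.G2 α y :=
    fun y hy => (hDDf y hy).deriv
  -- continuity of explicit f on positives, composed with squaring
  have hconf : ContinuousOn (fun x : ℝ => (1 - Real.exp (-(x^2))) / (x^2) ^ (1+α))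
      (Set.Ioi (0:ℝ)) := by
    refine ContinuousOn.div ?_ ?_ ?_
    · exact (continuous_const.sub (Real.continuous_exp.comp (continuous_pow 2).neg)).continuousOn
    · intro x hx
      have hx2 : (0:ℝ) < x^2 := by have : (0:ℝ) < x := hx; positivity
      have hcp : ContinuousAt (fun z : ℝ => z ^ 2) x := (continuous_pow 2).continuousAt
      exact (ContinuousAt.comp (f := fun z : ℝ => z ^ 2) (x := x)
        (Real.continuousAt_rpow_const (x^2) (1+α) (Or.inl hx2.ne')) hcp).continuousWithinAt
    · intro x hx
      have hx2 : (0:ℝ) < x^2 := by have : (0:ℝ) < x := hx; positivity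
      exact (Real.rpow_pos_of_pos hx2 _).ne'
  refine ⟨?_, ?_, ?_, ?_, ?_, ?_, ?_⟩
  · -- C² on (0,∞)
    have c0 : ContDiffOn ℝ 2 (fun y : ℝ => (1 - Real.exp (-y)) * y ^ (-(1+α))) (Set.Ioi 0) := by
      refine ContDiffOn.mul ?_ ?_
      · exact (contDiff_const.sub (Real.contDiff_exp.comp contDiff_neg)).contDiffOn
      · exact fun y hy => (Real.contDiffAt_rpow_const_of_ne (ne_of_gt hy)).contDiffWithinAt
    refine c0.congr fun y hy => ?_
    rw [hfx y, Real.rpow_neg (le_of_lt hy), div_eq_mul_inv]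
  · -- integral over (0,∞)
    have pieceA : IntegrableOn
        (fun x : ℝ => x ^ (d - 1) * |(1 - Real.exp (-(x^2))) / (x^2) ^ (1+α)|)
        (Set.Ioc (0:ℝ) 1) := by
      refine Integrable.mono' (g := fun x : ℝ => x ^ (1 - 2*α'))
        ((intervalIntegrable_iff_integrableOn_Ioc_of_le zero_le_one).mp
          (intervalIntegral.intervalIntegrable_rpow' (by linarith))) ?_ ?_
      · exact (((continuous_pow (d-1)).continuousOn.mul hconf.abs).mono
          Set.Ioc_subset_Ioi_self).aestronglyMeasurable measurableSet_Ioc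
      · filter_upwards [ae_restrict_mem measurableSet_Ioc] with x hx
        obtain ⟨hx0, _⟩ := hx
        have hx2 : (0:ℝ) < x^2 := by positivity
        have h1 := Stmt12Aux.absf_le1 α (x^2) hx2
        rw [Real.norm_eq_abs, abs_of_nonneg (mul_nonneg (pow_nonneg hx0.le _) (abs_nonneg _))]
        calc x ^ (d-1) * |(1 - Real.exp (-(x^2))) / (x^2) ^ (1+α)|
            ≤ x ^ (d-1) * (x^2) ^ (-α) := mul_le_mul_of_nonneg_left h1 (pow_nonneg hx0.le _)
          _ = x ^ (1 - 2*α') := by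
              rw [Stmt12Aux.sq_rpow x (-α) hx0.le, ← Real.rpow_natCast x (d-1),
                ← Real.rpow_add hx0]
              congr 1
              rw [Nat.cast_sub (by omega : 1 ≤ d), Nat.cast_one, hα]; ring
    have pieceB : IntegrableOn
        (fun x : ℝ => x ^ (d - 1) * |(1 - Real.exp (-(x^2))) / (x^2) ^ (1+α)|)
        (Set.Ioi (1:ℝ)) := by
      refine Integrable.mono' (g := fun x : ℝ => x ^ (-(1 + 2*α')))
        (integrableOn_Ioi_rpow_of_lt (by linarith) one_pos) ?_ ?_
      · exact (((continuous_pow (d-1)).continuousOn.mul hconf.abs).mono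
          (Set.Ioi_subset_Ioi zero_le_one)).aestronglyMeasurable measurableSet_Ioi
      · filter_upwards [ae_restrict_mem measurableSet_Ioi] with x hx
        have hx1 : (1:ℝ) < x := hx
        have hx0 : (0:ℝ) < x := lt_trans one_pos hx1
        have hx2 : (0:ℝ) < x^2 := by positivity
        have h1 := Stmt12Aux.absf_le2 α (x^2) hx2
        rw [Real.norm_eq_abs, abs_of_nonneg (mul_nonneg (pow_nonneg hx0.le _) (abs_nonneg _))]
        calc x ^ (d-1) * |(1 - Real.exp (-(x^2))) / (x^2) ^ (1+α)|
            ≤ x ^ (d-1) * (x^2) ^ (-(1+α)) := mul_le_mul_of_nonneg_left h1 (pow_nonneg hx0.le _)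
          _ = x ^ (-(1 + 2*α')) := by
              rw [Stmt12Aux.sq_rpow x (-(1+α)) hx0.le, ← Real.rpow_natCast x (d-1),
                ← Real.rpow_add hx0]
              congr 1
              rw [Nat.cast_sub (by omega : 1 ≤ d), Nat.cast_one, hα]; ring
    rw [show Set.Ioi (0:ℝ) = Set.Ioc 0 1 ∪ Set.Ioi 1 from
      (Set.Ioc_union_Ioi_eq_Ioi zero_le_one).symm]
    refine (pieceA.union pieceB).congr_fun (fun x hx => ?_)
      (measurableSet_Ioc.union measurableSet_Ioi)
    rw [hfx (x^2)]
  · -- first derivative integral over (1,∞)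
    have hG : IntegrableOn (fun x : ℝ => x ^ d * |Stmt12Aux.G1 α (x^2)|) (Set.Ioi 1) := by
      refine Integrable.mono'
        (g := fun x : ℝ => x ^ d * Real.exp (-x) + (1+α) * x ^ (-(2 + 2*α')))
        ((Stmt12Aux.integrable_pow_exp d).add
          ((integrableOn_Ioi_rpow_of_lt (by linarith) one_pos).const_mul _)) ?_ ?_
      · have hc : ContinuousOn (fun x : ℝ => x ^ d * |Stmt12Aux.G1 α (x^2)|) (Set.Ioi 1) := by
          refine (continuous_pow d).continuousOn.mul (ContinuousOn.abs ?_)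
          refine (Stmt12Aux.contOn_G1 α).comp ((continuous_pow 2).continuousOn) ?_
          intro x hx
          have hx1 : (1:ℝ) < x := hx
          have : (0:ℝ) < x^2 := by positivity
          exact this
        exact hc.aestronglyMeasurable measurableSet_Ioi
      · filter_upwards [ae_restrict_mem measurableSet_Ioi] with x hx
        have hx1 : (1:ℝ) < x := hx
        have hx0 : (0:ℝ) < x := lt_trans one_pos hx1
        have hsq : (1:ℝ) ≤ x^2 := by nlinarith
        have h1 := Stmt12Aux.absG1_le' α (x^2) hα0 hsq
        rw [Real.norm_eq_abs, abs_of_nonneg (mul_nonneg (pow_nonneg hx0.le _) (abs_nonneg _))]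
        have hmono : x ^ d * |Stmt12Aux.G1 α (x^2)|
            ≤ x ^ d * (Real.exp (-(x^2)) + (1+α) * (x^2) ^ (-(2+α))) :=
          mul_le_mul_of_nonneg_left h1 (pow_nonneg hx0.le _)
        refine le_trans hmono ?_
        rw [mul_add]
        have hA : x ^ d * Real.exp (-(x^2)) ≤ x ^ d * Real.exp (-x) := by
          refine mul_le_mul_of_nonneg_left ?_ (pow_nonneg hx0.le _)
          exact Real.exp_le_exp.mpr (by nlinarith)
        have hB : x ^ d * ((1+α) * (x^2) ^ (-(2+α))) = (1+α) * x ^ (-(2 + 2*α')) := by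
          rw [Stmt12Aux.sq_rpow x (-(2+α)) hx0.le, ← Real.rpow_natCast x d]
          rw [mul_left_comm]
          congr 1
          rw [← Real.rpow_add hx0]
          congr 1
          rw [hα]; ring
        linarith
    refine hG.congr_fun (fun x hx => ?_) measurableSet_Ioi
    have hx1 : (1:ℝ) < x := hx
    have hx2 : (0:ℝ) < x^2 := by positivity
    rw [hderiv1 (x^2) hx2]
  · -- second derivative integral over (1,∞)
    have hG : IntegrableOn (fun x : ℝ => x ^ (d+1) * |Stmt12Aux.G2 α (x^2)|) (Set.Ioi 1) := by
      refine Integrable.mono'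
        (g := fun x : ℝ => (1 + 2*(1+α)) * (x ^ (d+1) * Real.exp (-x))
          + (1+α)*(2+α) * x ^ (-(3 + 2*α')))
        (((Stmt12Aux.integrable_pow_exp (d+1)).const_mul _).add
          ((integrableOn_Ioi_rpow_of_lt (by linarith) one_pos).const_mul _)) ?_ ?_
      · have hc : ContinuousOn (fun x : ℝ => x ^ (d+1) * |Stmt12Aux.G2 α (x^2)|)
            (Set.Ioi 1) := by
          refine (continuous_pow (d+1)).continuousOn.mul (ContinuousOn.abs ?_)
          refine (Stmt12Aux.contOn_G2 α).comp ((continuous_pow 2).continuousOn) ?_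
          intro x hx
          have hx1 : (1:ℝ) < x := hx
          have : (0:ℝ) < x^2 := by positivity
          exact this
        exact hc.aestronglyMeasurable measurableSet_Ioi
      · filter_upwards [ae_restrict_mem measurableSet_Ioi] with x hx
        have hx1 : (1:ℝ) < x := hx
        have hx0 : (0:ℝ) < x := lt_trans one_pos hx1
        have hsq : (1:ℝ) ≤ x^2 := by nlinarith
        have h1 := Stmt12Aux.absG2_le' α (x^2) hα0 hsq
        rw [Real.norm_eq_abs, abs_of_nonneg (mul_nonneg (pow_nonneg hx0.le _) (abs_nonneg _))]
        have hmono : x ^ (d+1) * |Stmt12Aux.G2 α (x^2)|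
            ≤ x ^ (d+1) * ((1 + 2*(1+α)) * Real.exp (-(x^2))
              + (1+α)*(2+α) * (x^2) ^ (-(3+α))) :=
          mul_le_mul_of_nonneg_left h1 (pow_nonneg hx0.le _)
        refine le_trans hmono ?_
        rw [mul_add]
        have hA : x ^ (d+1) * ((1 + 2*(1+α)) * Real.exp (-(x^2)))
            ≤ (1 + 2*(1+α)) * (x ^ (d+1) * Real.exp (-x)) := by
          rw [mul_left_comm]
          refine mul_le_mul_of_nonneg_left ?_ (by linarith)
          refine mul_le_mul_of_nonneg_left ?_ (pow_nonneg hx0.le _)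
          exact Real.exp_le_exp.mpr (by nlinarith)
        have hB : x ^ (d+1) * ((1+α)*(2+α) * (x^2) ^ (-(3+α)))
            = (1+α)*(2+α) * x ^ (-(3 + 2*α')) := by
          rw [Stmt12Aux.sq_rpow x (-(3+α)) hx0.le, ← Real.rpow_natCast x (d+1)]
          rw [mul_left_comm]
          congr 1
          rw [← Real.rpow_add hx0]
          congr 1
          rw [hα]
          push_cast
          ring
        linarith
    refine hG.congr_fun (fun x hx => ?_) measurableSet_Ioi
    have hx1 : (1:ℝ) < x := hx
    have hx2 : (0:ℝ) < x^2 := by positivity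
    rw [hderiv2 (x^2) hx2]
  · -- limsup of f at 0⁺
    refine ⟨1, ?_⟩
    rw [Filter.eventually_map]
    filter_upwards [self_mem_nhdsWithin] with x hx
    have hx0 : (0:ℝ) < x := hx
    have hx2 : (0:ℝ) < x^2 := by positivity
    have h1 : |f (x^2)| ≤ (x^2) ^ (-α) := by
      rw [hfx (x^2)]; exact Stmt12Aux.absf_le1 α _ hx2
    have hr : (0:ℝ) ≤ x ^ (2*α) := Real.rpow_nonneg hx0.le _
    calc x ^ (2*α) * |f (x^2)| ≤ x ^ (2*α) * (x^2) ^ (-α) :=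
          mul_le_mul_of_nonneg_left h1 hr
      _ = 1 := by
          rw [Stmt12Aux.sq_rpow x (-α) hx0.le, ← Real.rpow_add hx0,
            show 2*α + 2*(-α) = 0 by ring, Real.rpow_zero]
  · -- limsup of f' at 0⁺
    refine ⟨2 + α, ?_⟩
    rw [Filter.eventually_map]
    filter_upwards [self_mem_nhdsWithin] with x hx
    have hx0 : (0:ℝ) < x := hx
    have hx2 : (0:ℝ) < x^2 := by positivity
    have h1 : |deriv f (x^2)| ≤ (2+α) * (x^2) ^ (-(1+α)) := by
      rw [hderiv1 (x^2) hx2]; exact Stmt12Aux.absG1_le α _ hα0 hx2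
    have hr : (0:ℝ) ≤ x ^ (2*(1+α)) := Real.rpow_nonneg hx0.le _
    calc x ^ (2*(1+α)) * |deriv f (x^2)| ≤ x ^ (2*(1+α)) * ((2+α) * (x^2) ^ (-(1+α))) :=
          mul_le_mul_of_nonneg_left h1 hr
      _ = 2 + α := by
          rw [Stmt12Aux.sq_rpow x (-(1+α)) hx0.le, mul_left_comm, ← Real.rpow_add hx0,
            show 2*(1+α) + 2*(-(1+α)) = 0 by ring, Real.rpow_zero, mul_one]
  · -- limsup of f'' at 0⁺
    refine ⟨1 + 2*(1+α) + (1+α)*(2+α), ?_⟩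
    rw [Filter.eventually_map]
    filter_upwards [self_mem_nhdsWithin] with x hx
    have hx0 : (0:ℝ) < x := hx
    have hx2 : (0:ℝ) < x^2 := by positivity
    have h1 : |deriv (deriv f) (x^2)| ≤ (1 + 2*(1+α) + (1+α)*(2+α)) * (x^2) ^ (-(2+α)) := by
      rw [hderiv2 (x^2) hx2]; exact Stmt12Aux.absG2_le α _ hα0 hx2
    have hr : (0:ℝ) ≤ x ^ (2*(2+α)) := Real.rpow_nonneg hx0.le _
    calc x ^ (2*(2+α)) * |deriv (deriv f) (x^2)|
        ≤ x ^ (2*(2+α)) * ((1 + 2*(1+α) + (1+α)*(2+α)) * (x^2) ^ (-(2+α))) :=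
          mul_le_mul_of_nonneg_left h1 hr
      _ = 1 + 2*(1+α) + (1+α)*(2+α) := by
          rw [Stmt12Aux.sq_rpow x (-(2+α)) hx0.le, mul_left_comm, ← Real.rpow_add hx0,
            show 2*(2+α) + 2*(-(2+α)) = 0 by ring, Real.rpow_zero, mul_one]
end

section
/- Let α' ∈ (0,1), α := d/2 − 1 + α', and τ ≥ 0. The function g_{α,τ} is twice continuously differentiable on (0,∞) and satisfies: ∫_0^∞ x^{d−1}|g_{α,τ}(x²)| dx < ∞, ∫_1^∞ x^{d}|g_{α,τ}'(x²)| dx < ∞, ∫_1^∞ x^{d+1}|g_{α,τ}''(x²)| dx < ∞, and the limits superior as x → 0⁺ of x^{2α}|g_{α,τ}(x²)|, of x^{2(1+α)}|g_{α,τ}'(x²)|, and of x^{2(1+α)}|g_{α,τ}''(x²)| are all finite. -/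
open MeasureTheory

lemma stmt_exp_le_one {s : ℝ} (hs : 0 ≤ s) : Real.exp (-s) ≤ 1 :=
  Real.exp_le_one_iff.mpr (by linarith)

lemma stmt_one_sub_exp_nonneg {s : ℝ} (hs : 0 ≤ s) : 0 ≤ 1 - Real.exp (-s) := by
  linarith [stmt_exp_le_one hs]

lemma stmt_one_sub_exp_le_one {s : ℝ} : 1 - Real.exp (-s) ≤ 1 := by
  linarith [Real.exp_pos (-s)]

lemma stmt_one_sub_exp_le {s : ℝ} : 1 - Real.exp (-s) ≤ s := by
  linarith [Real.add_one_le_exp (-s)]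

lemma stmt_self_le_exp {s : ℝ} : s ≤ Real.exp s := by
  linarith [Real.add_one_le_exp s, Real.exp_pos s]

lemma stmt_mul_exp_le_one {s : ℝ} : s * Real.exp (-s) ≤ 1 := by
  have h := stmt_self_le_exp (s := s)
  have hp := (Real.exp_pos s).le
  calc s * Real.exp (-s) ≤ Real.exp s * Real.exp (-s) :=
        mul_le_mul_of_nonneg_right h (Real.exp_pos (-s)).le
    _ = 1 := by rw [← Real.exp_add]; simp

lemma stmt_sq_mul_exp_le_four {s : ℝ} (hs : 0 ≤ s) : s ^ 2 * Real.exp (-s) ≤ 4 := by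
  have h2 : Real.exp (s / 2) * Real.exp (s / 2) = Real.exp s := by
    rw [← Real.exp_add]; ring_nf
  have h3 := Real.add_one_le_exp (s / 2)
  have h5 : (s / 2 + 1) * (s / 2 + 1) ≤ Real.exp (s / 2) * Real.exp (s / 2) :=
    mul_le_mul h3 h3 (by linarith) (Real.exp_pos _).le
  have h4 : s ^ 2 ≤ 4 * Real.exp s := by nlinarith
  calc s ^ 2 * Real.exp (-s) ≤ (4 * Real.exp s) * Real.exp (-s) :=
        mul_le_mul_of_nonneg_right h4 (Real.exp_pos (-s)).le
    _ = 4 := by rw [mul_assoc, ← Real.exp_add]; simp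

lemma stmt_exp_le_inv {s : ℝ} (hs : 0 < s) : Real.exp (-s) ≤ 1 / s := by
  rw [le_div_iff₀ hs, mul_comm]
  exact stmt_mul_exp_le_one

lemma stmt_exp_le_inv_sq {s : ℝ} (hs : 0 < s) : Real.exp (-s) ≤ 4 / s ^ 2 := by
  rw [le_div_iff₀ (by positivity), mul_comm]
  exact stmt_sq_mul_exp_le_four hs.le

noncomputable def stmtU (τ x : ℝ) : ℝ := (1 - Real.exp (-x)) ^ 2 * Real.exp (-(τ * x))

noncomputable def stmtU1 (τ x : ℝ) : ℝ :=
  (2 * Real.exp (-x) * (1 - Real.exp (-x)) - τ * (1 - Real.exp (-x)) ^ 2) * Real.exp (-(τ * x))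

noncomputable def stmtU2 (τ x : ℝ) : ℝ :=
  (2 * Real.exp (-x) * Real.exp (-x) - 2 * Real.exp (-x) * (1 - Real.exp (-x))
    - 4 * τ * Real.exp (-x) * (1 - Real.exp (-x)) + τ ^ 2 * (1 - Real.exp (-x)) ^ 2)
    * Real.exp (-(τ * x))

noncomputable def stmtG (τ α x : ℝ) : ℝ := stmtU τ x * x ^ (-(1 + α)) / 2

noncomputable def stmtG1 (τ α x : ℝ) : ℝ :=
  (stmtU1 τ x * x ^ (-(1 + α)) + stmtU τ x * (-(1 + α)) * x ^ (-(1 + α) - 1)) / 2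

noncomputable def stmtG2 (τ α x : ℝ) : ℝ :=
  (stmtU2 τ x * x ^ (-(1 + α)) + 2 * (stmtU1 τ x * (-(1 + α)) * x ^ (-(1 + α) - 1))
    + stmtU τ x * (-(1 + α)) * ((-(1 + α) - 1) * x ^ (-(1 + α) - 1 - 1))) / 2

lemma stmt_hE (x : ℝ) : HasDerivAt (fun x : ℝ => Real.exp (-x)) (-Real.exp (-x)) x := by
  simpa using (hasDerivAt_neg x).exp

lemma stmt_hF (τ x : ℝ) :
    HasDerivAt (fun x : ℝ => Real.exp (-(τ * x))) (-τ * Real.exp (-(τ * x))) x := by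
  have h : HasDerivAt (fun x : ℝ => -(τ * x)) (-τ) x := by
    simpa using (((hasDerivAt_id x).const_mul τ).fun_neg)
  simpa [mul_comm] using h.exp

lemma stmt_hP (x : ℝ) :
    HasDerivAt (fun x : ℝ => 1 - Real.exp (-x)) (Real.exp (-x)) x := by
  simpa using (stmt_hE x).const_sub 1

lemma hasDerivAt_stmtU (τ x : ℝ) : HasDerivAt (stmtU τ) (stmtU1 τ x) x := by
  have h := ((stmt_hP x).fun_pow 2).fun_mul (stmt_hF τ x)
  refine h.congr_deriv ?_
  simp only [stmtU1]
  push_cast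
  ring

lemma hasDerivAt_stmtU1 (τ x : ℝ) : HasDerivAt (stmtU1 τ) (stmtU2 τ x) x := by
  have hinner : HasDerivAt
      (fun x : ℝ => 2 * Real.exp (-x) * (1 - Real.exp (-x)) - τ * (1 - Real.exp (-x)) ^ 2)
      (2 * (-Real.exp (-x)) * (1 - Real.exp (-x)) + 2 * Real.exp (-x) * Real.exp (-x)
        - τ * (2 * (1 - Real.exp (-x)) * Real.exp (-x))) x := by
    have h1 := (((stmt_hE x).const_mul 2).fun_mul (stmt_hP x))
    have h2 := ((stmt_hP x).fun_pow 2).const_mul τ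
    have := h1.fun_sub h2
    refine this.congr_deriv ?_
    push_cast
    ring
  have h := hinner.fun_mul (stmt_hF τ x)
  refine h.congr_deriv ?_
  simp only [stmtU2, stmtU1]
  ring

lemma stmt_hrpow (c : ℝ) {x : ℝ} (hx : 0 < x) :
    HasDerivAt (fun x : ℝ => x ^ c) (c * x ^ (c - 1)) x :=
  Real.hasDerivAt_rpow_const (Or.inl hx.ne')

lemma hasDerivAt_stmtG (τ α : ℝ) {x : ℝ} (hx : 0 < x) :
    HasDerivAt (stmtG τ α) (stmtG1 τ α x) x := by
  have h := ((hasDerivAt_stmtU τ x).fun_mul (stmt_hrpow (-(1 + α)) hx)).div_const 2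
  refine h.congr_deriv ?_
  simp only [stmtG1]
  ring

lemma hasDerivAt_stmtG1 (τ α : ℝ) {x : ℝ} (hx : 0 < x) :
    HasDerivAt (stmtG1 τ α) (stmtG2 τ α x) x := by
  have h1 := (hasDerivAt_stmtU1 τ x).fun_mul (stmt_hrpow (-(1 + α)) hx)
  have h2 := ((hasDerivAt_stmtU τ x).mul_const (-(1 + α))).fun_mul (stmt_hrpow (-(1 + α) - 1) hx)
  have h := (h1.fun_add h2).div_const 2
  refine h.congr_deriv ?_
  simp only [stmtG2]
  ring

lemma stmt_mul_le {a b A B : ℝ} (ha : 0 ≤ a) (hA : a ≤ A) (hb : 0 ≤ b) (hB : b ≤ B) :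
    a * b ≤ A * B :=
  mul_le_mul hA hB hb (ha.trans hA)

section
variable {τ y : ℝ}

lemma stmt_absU_le_one (hτ : 0 ≤ τ) (hy : 0 ≤ y) : |stmtU τ y| ≤ 1 := by
  have hE1 : Real.exp (-y) ≤ 1 := stmt_exp_le_one hy
  have hE0 := (Real.exp_pos (-y)).le
  have hP0 : 0 ≤ 1 - Real.exp (-y) := by linarith
  have hP1 : 1 - Real.exp (-y) ≤ 1 := by linarith [Real.exp_pos (-y)]
  have hF1 : Real.exp (-(τ * y)) ≤ 1 := stmt_exp_le_one (mul_nonneg hτ hy)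
  have hF0 := (Real.exp_pos (-(τ * y))).le
  have key : (1 - Real.exp (-y)) ^ 2 * Real.exp (-(τ * y)) ≤ 1 * 1 := by
    refine stmt_mul_le (by positivity) ?_ hF0 hF1
    nlinarith
  rw [stmtU, abs_of_nonneg (by positivity)]
  linarith

lemma stmt_absU_le_sq (hτ : 0 ≤ τ) (hy : 0 ≤ y) : |stmtU τ y| ≤ y ^ 2 := by
  have hE1 : Real.exp (-y) ≤ 1 := stmt_exp_le_one hy
  have hE0 := (Real.exp_pos (-y)).le
  have hP0 : 0 ≤ 1 - Real.exp (-y) := by linarith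
  have hPy : 1 - Real.exp (-y) ≤ y := stmt_one_sub_exp_le
  have hF1 : Real.exp (-(τ * y)) ≤ 1 := stmt_exp_le_one (mul_nonneg hτ hy)
  have hF0 := (Real.exp_pos (-(τ * y))).le
  have key : (1 - Real.exp (-y)) ^ 2 * Real.exp (-(τ * y)) ≤ y ^ 2 * 1 := by
    refine stmt_mul_le (by positivity) ?_ hF0 hF1
    nlinarith
  rw [stmtU, abs_of_nonneg (by positivity)]
  linarith

lemma stmt_absU1_le_lin (hτ : 0 ≤ τ) (hy : 0 ≤ y) : |stmtU1 τ y| ≤ (2 + τ) * y := by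
  have hE1 : Real.exp (-y) ≤ 1 := stmt_exp_le_one hy
  have hE0 := (Real.exp_pos (-y)).le
  have hP0 : 0 ≤ 1 - Real.exp (-y) := by linarith
  have hP1 : 1 - Real.exp (-y) ≤ 1 := by linarith [Real.exp_pos (-y)]
  have hPy : 1 - Real.exp (-y) ≤ y := stmt_one_sub_exp_le
  have hF1 : Real.exp (-(τ * y)) ≤ 1 := stmt_exp_le_one (mul_nonneg hτ hy)
  have hF0 := (Real.exp_pos (-(τ * y))).le
  have q1 : Real.exp (-y) * (1 - Real.exp (-y)) * Real.exp (-(τ * y)) ≤ (1 * y) * 1 :=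
    stmt_mul_le (mul_nonneg hE0 hP0) (stmt_mul_le hE0 hE1 hP0 hPy) hF0 hF1
  have q1' : 0 ≤ Real.exp (-y) * (1 - Real.exp (-y)) * Real.exp (-(τ * y)) := by positivity
  have q2 : τ * (1 - Real.exp (-y)) ^ 2 * Real.exp (-(τ * y)) ≤ (τ * y) * 1 := by
    refine stmt_mul_le (by positivity) ?_ hF0 hF1
    have : (1 - Real.exp (-y)) ^ 2 ≤ y := by nlinarith
    exact mul_le_mul_of_nonneg_left this hτ
  have q2' : (0:ℝ) ≤ τ * (1 - Real.exp (-y)) ^ 2 * Real.exp (-(τ * y)) := by positivity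
  rw [stmtU1, abs_le]
  constructor <;> nlinarith

lemma stmt_absU1_le_inv (hτ : 0 ≤ τ) (hy : 0 < y) : |stmtU1 τ y| ≤ 3 / y := by
  rw [le_div_iff₀ hy]
  have habs : |stmtU1 τ y| * y = |stmtU1 τ y * y| := by
    rw [abs_mul, abs_of_pos hy]
  rw [habs]
  have hE1 : Real.exp (-y) ≤ 1 := stmt_exp_le_one hy.le
  have hE0 := (Real.exp_pos (-y)).le
  have hP0 : 0 ≤ 1 - Real.exp (-y) := by linarith
  have hP1 : 1 - Real.exp (-y) ≤ 1 := by linarith [Real.exp_pos (-y)]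
  have hF1 : Real.exp (-(τ * y)) ≤ 1 := stmt_exp_le_one (mul_nonneg hτ hy.le)
  have hF0 := (Real.exp_pos (-(τ * y))).le
  have hEy : y * Real.exp (-y) ≤ 1 := stmt_mul_exp_le_one
  have hτyF : τ * y * Real.exp (-(τ * y)) ≤ 1 := stmt_mul_exp_le_one
  -- q1 : E * p * F * y ≤ 1
  have q1 : (y * Real.exp (-y)) * ((1 - Real.exp (-y)) * Real.exp (-(τ * y))) ≤ 1 * (1 * 1) :=
    stmt_mul_le (mul_nonneg hy.le hE0) hEy (by positivity) (stmt_mul_le hP0 hP1 hF0 hF1)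
  have q1' : (0:ℝ) ≤ (y * Real.exp (-y)) * ((1 - Real.exp (-y)) * Real.exp (-(τ * y))) := by
    positivity
  -- q2 : τ * p^2 * F * y ≤ 1
  have q2 : (τ * y * Real.exp (-(τ * y))) * (1 - Real.exp (-y)) ^ 2 ≤ 1 * 1 := by
    refine stmt_mul_le (by positivity) hτyF (by positivity) ?_
    nlinarith
  have q2' : (0:ℝ) ≤ (τ * y * Real.exp (-(τ * y))) * (1 - Real.exp (-y)) ^ 2 := by positivity
  rw [stmtU1, abs_le]
  constructor <;> nlinarith

lemma stmt_absU2_le_const (hτ : 0 ≤ τ) (hy : 0 ≤ y) : |stmtU2 τ y| ≤ 12 := by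
  have hE1 : Real.exp (-y) ≤ 1 := stmt_exp_le_one hy
  have hE0 := (Real.exp_pos (-y)).le
  have hP0 : 0 ≤ 1 - Real.exp (-y) := by linarith
  have hP1 : 1 - Real.exp (-y) ≤ 1 := by linarith [Real.exp_pos (-y)]
  have hPy : 1 - Real.exp (-y) ≤ y := stmt_one_sub_exp_le
  have hF1 : Real.exp (-(τ * y)) ≤ 1 := stmt_exp_le_one (mul_nonneg hτ hy)
  have hF0 := (Real.exp_pos (-(τ * y))).le
  have hτyF : τ * y * Real.exp (-(τ * y)) ≤ 1 := stmt_mul_exp_le_one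
  have hτ2F : (τ * y) ^ 2 * Real.exp (-(τ * y)) ≤ 4 :=
    stmt_sq_mul_exp_le_four (mul_nonneg hτ hy)
  have n1 : Real.exp (-y) * Real.exp (-y) * Real.exp (-(τ * y)) ≤ 1 * 1 := by
    refine stmt_mul_le (by positivity) ?_ hF0 hF1
    exact stmt_mul_le hE0 hE1 hE0 hE1 |>.trans (by norm_num)
  have n1' : (0:ℝ) ≤ Real.exp (-y) * Real.exp (-y) * Real.exp (-(τ * y)) := by positivity
  have n2 : Real.exp (-y) * (1 - Real.exp (-y)) * Real.exp (-(τ * y)) ≤ 1 * 1 := by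
    refine stmt_mul_le (by positivity) ?_ hF0 hF1
    exact stmt_mul_le hE0 hE1 hP0 hP1 |>.trans (by norm_num)
  have n2' : (0:ℝ) ≤ Real.exp (-y) * (1 - Real.exp (-y)) * Real.exp (-(τ * y)) := by positivity
  -- n3 : τ * E * p * F ≤ 1  via (τ p F) * E with τ p F ≤ τ y F ≤ 1
  have hτpF : τ * (1 - Real.exp (-y)) * Real.exp (-(τ * y)) ≤ 1 := by
    refine le_trans ?_ hτyF
    have : τ * (1 - Real.exp (-y)) ≤ τ * y := mul_le_mul_of_nonneg_left hPy hτ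
    exact mul_le_mul_of_nonneg_right this hF0
  have n3 : (τ * (1 - Real.exp (-y)) * Real.exp (-(τ * y))) * Real.exp (-y) ≤ 1 * 1 :=
    stmt_mul_le (by positivity) hτpF hE0 hE1
  have n3' : (0:ℝ) ≤ (τ * (1 - Real.exp (-y)) * Real.exp (-(τ * y))) * Real.exp (-y) := by
    positivity
  -- n4 : τ^2 * p^2 * F ≤ 4
  have n4 : τ ^ 2 * (1 - Real.exp (-y)) ^ 2 * Real.exp (-(τ * y)) ≤ 4 := by
    refine le_trans ?_ hτ2F
    have h : τ ^ 2 * (1 - Real.exp (-y)) ^ 2 ≤ (τ * y) ^ 2 := by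
      have := stmt_mul_le (mul_nonneg hτ hP0) (mul_le_mul_of_nonneg_left hPy hτ)
        (mul_nonneg hτ hP0) (mul_le_mul_of_nonneg_left hPy hτ)
      nlinarith
    exact mul_le_mul_of_nonneg_right h hF0
  have n4' : (0:ℝ) ≤ τ ^ 2 * (1 - Real.exp (-y)) ^ 2 * Real.exp (-(τ * y)) := by positivity
  rw [stmtU2, abs_le]
  constructor <;> nlinarith

lemma stmt_absU2_le_inv_sq (hτ : 0 ≤ τ) (hy : 0 < y) : |stmtU2 τ y| ≤ 24 / y ^ 2 := by
  rw [le_div_iff₀ (by positivity : (0:ℝ) < y ^ 2)]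
  have habs : |stmtU2 τ y| * y ^ 2 = |stmtU2 τ y * y ^ 2| := by
    rw [abs_mul, abs_of_pos (by positivity : (0:ℝ) < y ^ 2)]
  rw [habs]
  have hE1 : Real.exp (-y) ≤ 1 := stmt_exp_le_one hy.le
  have hE0 := (Real.exp_pos (-y)).le
  have hP0 : 0 ≤ 1 - Real.exp (-y) := by linarith
  have hP1 : 1 - Real.exp (-y) ≤ 1 := by linarith [Real.exp_pos (-y)]
  have hF1 : Real.exp (-(τ * y)) ≤ 1 := stmt_exp_le_one (mul_nonneg hτ hy.le)
  have hF0 := (Real.exp_pos (-(τ * y))).le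
  have hEy : y * Real.exp (-y) ≤ 1 := stmt_mul_exp_le_one
  have hEy2 : y ^ 2 * Real.exp (-y) ≤ 4 := stmt_sq_mul_exp_le_four hy.le
  have hτyF : τ * y * Real.exp (-(τ * y)) ≤ 1 := stmt_mul_exp_le_one
  have hτ2F : (τ * y) ^ 2 * Real.exp (-(τ * y)) ≤ 4 :=
    stmt_sq_mul_exp_le_four (mul_nonneg hτ hy.le)
  -- m1 = E*E*F*y^2 = (yE)*(yE)*F ≤ 1
  have m1 : ((y * Real.exp (-y)) * (y * Real.exp (-y))) * Real.exp (-(τ * y)) ≤ 1 * 1 :=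
    stmt_mul_le (by positivity) (stmt_mul_le (by positivity) hEy (by positivity) hEy
      |>.trans (by norm_num)) hF0 hF1
  have m1' : (0:ℝ) ≤ ((y * Real.exp (-y)) * (y * Real.exp (-y))) * Real.exp (-(τ * y)) := by
    positivity
  -- m2 = E*p*F*y^2 = (y^2 E) * (p F) ≤ 4
  have m2 : (y ^ 2 * Real.exp (-y)) * ((1 - Real.exp (-y)) * Real.exp (-(τ * y))) ≤ 4 * (1 * 1) :=
    stmt_mul_le (by positivity) hEy2 (by positivity) (stmt_mul_le hP0 hP1 hF0 hF1)
  have m2' : (0:ℝ) ≤ (y ^ 2 * Real.exp (-y)) * ((1 - Real.exp (-y)) * Real.exp (-(τ * y))) := by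
    positivity
  -- m3 = τ*E*p*F*y^2 = (yE)*(τ y F)*p ≤ 1
  have m3 : ((y * Real.exp (-y)) * (τ * y * Real.exp (-(τ * y)))) * (1 - Real.exp (-y))
      ≤ (1 * 1) * 1 :=
    stmt_mul_le (by positivity) (stmt_mul_le (by positivity) hEy (by positivity) hτyF) hP0 hP1
  have m3' : (0:ℝ) ≤ ((y * Real.exp (-y)) * (τ * y * Real.exp (-(τ * y))))
      * (1 - Real.exp (-y)) := by positivity
  -- m4 = τ^2 p^2 F y^2 = ((τ y)^2 F) * p^2 ≤ 4
  have m4 : ((τ * y) ^ 2 * Real.exp (-(τ * y))) * (1 - Real.exp (-y)) ^ 2 ≤ 4 * 1 := by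
    refine stmt_mul_le (by positivity) hτ2F (by positivity) ?_
    nlinarith
  have m4' : (0:ℝ) ≤ ((τ * y) ^ 2 * Real.exp (-(τ * y))) * (1 - Real.exp (-y)) ^ 2 := by
    positivity
  rw [stmtU2, abs_le]
  constructor <;> nlinarith
end

lemma stmt_rpow_add {y : ℝ} (hy : 0 < y) {a b c : ℝ} (h : a + b = c) :
    y ^ a * y ^ b = y ^ c := by rw [← Real.rpow_add hy, h]

lemma stmt_abs_mul_rpow {u y : ℝ} (hy : 0 < y) (c : ℝ) : |u * y ^ c| = |u| * y ^ c := by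
  rw [abs_mul, abs_of_pos (Real.rpow_pos_of_pos hy c)]

lemma stmt_npow_two_rpow {y : ℝ} (hy : 0 < y) {b c : ℝ} (h : 2 + b = c) :
    y ^ (2:ℕ) * y ^ b = y ^ c := by
  rw [← Real.rpow_natCast y 2, ← Real.rpow_add hy]
  norm_num [h]

section
variable {τ α y : ℝ}

lemma stmt_absG_le_left (hτ : 0 ≤ τ) (hy : 0 < y) : |stmtG τ α y| ≤ y ^ (1 - α) / 2 := by
  rw [stmtG, abs_div, abs_two, stmt_abs_mul_rpow hy]
  have h := mul_le_mul_of_nonneg_right (stmt_absU_le_sq hτ hy.le)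
    (Real.rpow_pos_of_pos hy (-(1 + α))).le
  rw [stmt_npow_two_rpow hy (show 2 + -(1 + α) = 1 - α by ring)] at h
  linarith

lemma stmt_absG_le_right (hτ : 0 ≤ τ) (hy : 0 < y) : |stmtG τ α y| ≤ y ^ (-(1 + α)) / 2 := by
  rw [stmtG, abs_div, abs_two, stmt_abs_mul_rpow hy]
  have h := mul_le_mul_of_nonneg_right (stmt_absU_le_one hτ hy.le)
    (Real.rpow_pos_of_pos hy (-(1 + α))).le
  rw [one_mul] at h
  linarith

lemma stmt_absG1_le_left (hτ : 0 ≤ τ) (hα : 0 ≤ α) (hy : 0 < y) :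
    |stmtG1 τ α y| ≤ (3 + τ + α) * y ^ (-α) := by
  have hr : (0:ℝ) < y ^ (-α) := Real.rpow_pos_of_pos hy _
  have h1 : |stmtU1 τ y * y ^ (-(1 + α))| ≤ (2 + τ) * y ^ (-α) := by
    rw [stmt_abs_mul_rpow hy]
    calc |stmtU1 τ y| * y ^ (-(1 + α)) ≤ ((2 + τ) * y) * y ^ (-(1 + α)) :=
          mul_le_mul_of_nonneg_right (stmt_absU1_le_lin hτ hy.le)
            (Real.rpow_pos_of_pos hy _).le
      _ = (2 + τ) * (y ^ (1:ℝ) * y ^ (-(1 + α))) := by rw [Real.rpow_one]; ring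
      _ = (2 + τ) * y ^ (-α) := by rw [stmt_rpow_add hy (show (1:ℝ) + -(1 + α) = -α by ring)]
  have h2 : |stmtU τ y * (-(1 + α)) * y ^ (-(1 + α) - 1)| ≤ (1 + α) * y ^ (-α) := by
    rw [stmt_abs_mul_rpow hy, abs_mul, abs_neg, abs_of_nonneg (by linarith : (0:ℝ) ≤ 1 + α)]
    calc |stmtU τ y| * (1 + α) * y ^ (-(1 + α) - 1)
        ≤ y ^ (2:ℕ) * (1 + α) * y ^ (-(1 + α) - 1) := by
          have := mul_le_mul_of_nonneg_right (stmt_absU_le_sq hτ hy.le)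
            (by linarith : (0:ℝ) ≤ 1 + α)
          exact mul_le_mul_of_nonneg_right this (Real.rpow_pos_of_pos hy _).le
      _ = (1 + α) * (y ^ (2:ℕ) * y ^ (-(1 + α) - 1)) := by ring
      _ = (1 + α) * y ^ (-α) := by
          rw [stmt_npow_two_rpow hy (show 2 + (-(1 + α) - 1) = -α by ring)]
  calc |stmtG1 τ α y| ≤ (|stmtU1 τ y * y ^ (-(1 + α))|
        + |stmtU τ y * (-(1 + α)) * y ^ (-(1 + α) - 1)|) / 2 := by
        rw [stmtG1, abs_div, abs_two]
        gcongr
        exact abs_add_le _ _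
    _ ≤ (3 + τ + α) * y ^ (-α) := by nlinarith [hr]

lemma stmt_div_rpow_one {y : ℝ} (hy : 0 < y) (b : ℝ) : y ^ b / y = y ^ (b - 1) := by
  rw [Real.rpow_sub hy, Real.rpow_one]

lemma stmt_div_rpow_two {y : ℝ} (hy : 0 < y) (b : ℝ) : y ^ b / y ^ (2:ℕ) = y ^ (b - 2) := by
  rw [Real.rpow_sub hy, ← Real.rpow_natCast y 2]
  norm_num

lemma stmt_absG1_le_right (hτ : 0 ≤ τ) (hα : 0 ≤ α) (hy : 0 < y) :
    |stmtG1 τ α y| ≤ (4 + α) * y ^ (-(2 + α)) := by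
  have hr : (0:ℝ) < y ^ (-(2 + α)) := Real.rpow_pos_of_pos hy _
  have h1 : |stmtU1 τ y * y ^ (-(1 + α))| ≤ 3 * y ^ (-(2 + α)) := by
    rw [stmt_abs_mul_rpow hy]
    calc |stmtU1 τ y| * y ^ (-(1 + α)) ≤ (3 / y) * y ^ (-(1 + α)) :=
          mul_le_mul_of_nonneg_right (stmt_absU1_le_inv hτ hy)
            (Real.rpow_pos_of_pos hy _).le
      _ = 3 * (y ^ (-(1 + α)) / y) := by ring
      _ = 3 * y ^ (-(2 + α)) := by
          rw [stmt_div_rpow_one hy, show -(1 + α) - 1 = -(2 + α) by ring]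
  have h2 : |stmtU τ y * (-(1 + α)) * y ^ (-(1 + α) - 1)| ≤ (1 + α) * y ^ (-(2 + α)) := by
    rw [stmt_abs_mul_rpow hy, abs_mul, abs_neg, abs_of_nonneg (by linarith : (0:ℝ) ≤ 1 + α),
      show -(1 + α) - 1 = -(2 + α) by ring]
    have := mul_le_mul_of_nonneg_right (stmt_absU_le_one hτ hy.le)
      (by linarith : (0:ℝ) ≤ 1 + α)
    have := mul_le_mul_of_nonneg_right this hr.le
    linarith
  calc |stmtG1 τ α y| ≤ (|stmtU1 τ y * y ^ (-(1 + α))|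
        + |stmtU τ y * (-(1 + α)) * y ^ (-(1 + α) - 1)|) / 2 := by
        rw [stmtG1, abs_div, abs_two]
        gcongr
        exact abs_add_le _ _
    _ ≤ (4 + α) * y ^ (-(2 + α)) := by nlinarith [hr]

lemma stmt_absG2_le_left (hτ : 0 ≤ τ) (hα : 0 ≤ α) (hy : 0 < y) :
    |stmtG2 τ α y| ≤ (12 + (1 + α) * (2 + τ) + (1 + α) * (2 + α)) * y ^ (-(1 + α)) := by
  have hr : (0:ℝ) < y ^ (-(1 + α)) := Real.rpow_pos_of_pos hy _
  have h1 : |stmtU2 τ y * y ^ (-(1 + α))| ≤ 12 * y ^ (-(1 + α)) := by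
    rw [stmt_abs_mul_rpow hy]
    exact mul_le_mul_of_nonneg_right (stmt_absU2_le_const hτ hy.le) hr.le
  have h2 : |2 * (stmtU1 τ y * (-(1 + α)) * y ^ (-(1 + α) - 1))|
      ≤ 2 * (1 + α) * (2 + τ) * y ^ (-(1 + α)) := by
    rw [abs_mul, abs_two, stmt_abs_mul_rpow hy, abs_mul, abs_neg,
      abs_of_nonneg (by linarith : (0:ℝ) ≤ 1 + α)]
    have step : |stmtU1 τ y| * y ^ (-(1 + α) - 1) ≤ (2 + τ) * y ^ (-(1 + α)) := by
      calc |stmtU1 τ y| * y ^ (-(1 + α) - 1) ≤ ((2 + τ) * y) * y ^ (-(1 + α) - 1) :=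
            mul_le_mul_of_nonneg_right (stmt_absU1_le_lin hτ hy.le)
              (Real.rpow_pos_of_pos hy _).le
        _ = (2 + τ) * (y ^ (1:ℝ) * y ^ (-(1 + α) - 1)) := by rw [Real.rpow_one]; ring
        _ = (2 + τ) * y ^ (-(1 + α)) := by
            rw [stmt_rpow_add hy (show (1:ℝ) + (-(1 + α) - 1) = -(1 + α) by ring)]
    calc 2 * (|stmtU1 τ y| * (1 + α) * y ^ (-(1 + α) - 1))
        = 2 * (1 + α) * (|stmtU1 τ y| * y ^ (-(1 + α) - 1)) := by ring
      _ ≤ 2 * (1 + α) * ((2 + τ) * y ^ (-(1 + α))) := by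
          exact mul_le_mul_of_nonneg_left step (by linarith)
      _ = 2 * (1 + α) * (2 + τ) * y ^ (-(1 + α)) := by ring
  have h3 : |stmtU τ y * (-(1 + α)) * ((-(1 + α) - 1) * y ^ (-(1 + α) - 1 - 1))|
      ≤ (1 + α) * (2 + α) * y ^ (-(1 + α)) := by
    rw [abs_mul, abs_mul, abs_mul, abs_neg, abs_of_nonneg (by linarith : (0:ℝ) ≤ 1 + α),
      abs_of_pos (Real.rpow_pos_of_pos hy _),
      show |(-(1 + α) - 1)| = 2 + α by rw [show -(1 + α) - 1 = -(2 + α) by ring, abs_neg,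
        abs_of_nonneg (by linarith : (0:ℝ) ≤ 2 + α)]]
    calc |stmtU τ y| * (1 + α) * ((2 + α) * y ^ (-(1 + α) - 1 - 1))
        ≤ y ^ (2:ℕ) * (1 + α) * ((2 + α) * y ^ (-(1 + α) - 1 - 1)) := by
          have h0 : (0:ℝ) ≤ (1 + α) * ((2 + α) * y ^ (-(1 + α) - 1 - 1)) := by
            have := (Real.rpow_pos_of_pos hy (-(1 + α) - 1 - 1)).le
            positivity
          calc |stmtU τ y| * (1 + α) * ((2 + α) * y ^ (-(1 + α) - 1 - 1))
              = |stmtU τ y| * ((1 + α) * ((2 + α) * y ^ (-(1 + α) - 1 - 1))) := by ring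
            _ ≤ y ^ (2:ℕ) * ((1 + α) * ((2 + α) * y ^ (-(1 + α) - 1 - 1))) :=
                mul_le_mul_of_nonneg_right (stmt_absU_le_sq hτ hy.le) h0
            _ = y ^ (2:ℕ) * (1 + α) * ((2 + α) * y ^ (-(1 + α) - 1 - 1)) := by ring
      _ = (1 + α) * (2 + α) * (y ^ (2:ℕ) * y ^ (-(1 + α) - 1 - 1)) := by ring
      _ = (1 + α) * (2 + α) * y ^ (-(1 + α)) := by
          rw [stmt_npow_two_rpow hy (show 2 + (-(1 + α) - 1 - 1) = -(1 + α) by ring)]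
  calc |stmtG2 τ α y| ≤ (|stmtU2 τ y * y ^ (-(1 + α))|
        + |2 * (stmtU1 τ y * (-(1 + α)) * y ^ (-(1 + α) - 1))|
        + |stmtU τ y * (-(1 + α)) * ((-(1 + α) - 1) * y ^ (-(1 + α) - 1 - 1))|) / 2 := by
        rw [stmtG2, abs_div, abs_two]
        gcongr
        exact abs_add_three _ _ _
    _ ≤ (12 + (1 + α) * (2 + τ) + (1 + α) * (2 + α)) * y ^ (-(1 + α)) := by
        nlinarith [hr, mul_nonneg (mul_nonneg (by linarith : (0:ℝ) ≤ 1 + α)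
            (by linarith : (0:ℝ) ≤ 2 + α)) hr.le,
          mul_nonneg (mul_nonneg (by linarith : (0:ℝ) ≤ 1 + α)
            (by linarith : (0:ℝ) ≤ 2 + τ)) hr.le]

lemma stmt_absG2_le_right (hτ : 0 ≤ τ) (hα : 0 ≤ α) (hy : 0 < y) :
    |stmtG2 τ α y| ≤ (24 + 6 * (1 + α) + (1 + α) * (2 + α)) * y ^ (-(3 + α)) := by
  have hr : (0:ℝ) < y ^ (-(3 + α)) := Real.rpow_pos_of_pos hy _
  have h1 : |stmtU2 τ y * y ^ (-(1 + α))| ≤ 24 * y ^ (-(3 + α)) := by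
    rw [stmt_abs_mul_rpow hy]
    calc |stmtU2 τ y| * y ^ (-(1 + α)) ≤ (24 / y ^ (2:ℕ)) * y ^ (-(1 + α)) :=
          mul_le_mul_of_nonneg_right (stmt_absU2_le_inv_sq hτ hy)
            (Real.rpow_pos_of_pos hy _).le
      _ = 24 * (y ^ (-(1 + α)) / y ^ (2:ℕ)) := by ring
      _ = 24 * y ^ (-(3 + α)) := by
          rw [stmt_div_rpow_two hy, show -(1 + α) - 2 = -(3 + α) by ring]
  have h2 : |2 * (stmtU1 τ y * (-(1 + α)) * y ^ (-(1 + α) - 1))|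
      ≤ 6 * (1 + α) * y ^ (-(3 + α)) := by
    rw [abs_mul, abs_two, stmt_abs_mul_rpow hy, abs_mul, abs_neg,
      abs_of_nonneg (by linarith : (0:ℝ) ≤ 1 + α)]
    have step : |stmtU1 τ y| * y ^ (-(1 + α) - 1) ≤ 3 * y ^ (-(3 + α)) := by
      calc |stmtU1 τ y| * y ^ (-(1 + α) - 1) ≤ (3 / y) * y ^ (-(1 + α) - 1) :=
            mul_le_mul_of_nonneg_right (stmt_absU1_le_inv hτ hy)
              (Real.rpow_pos_of_pos hy _).le
        _ = 3 * (y ^ (-(1 + α) - 1) / y) := by ring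
        _ = 3 * y ^ (-(3 + α)) := by
            rw [stmt_div_rpow_one hy, show -(1 + α) - 1 - 1 = -(3 + α) by ring]
    calc 2 * (|stmtU1 τ y| * (1 + α) * y ^ (-(1 + α) - 1))
        = 2 * (1 + α) * (|stmtU1 τ y| * y ^ (-(1 + α) - 1)) := by ring
      _ ≤ 2 * (1 + α) * (3 * y ^ (-(3 + α))) := mul_le_mul_of_nonneg_left step (by linarith)
      _ = 6 * (1 + α) * y ^ (-(3 + α)) := by ring
  have h3 : |stmtU τ y * (-(1 + α)) * ((-(1 + α) - 1) * y ^ (-(1 + α) - 1 - 1))|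
      ≤ (1 + α) * (2 + α) * y ^ (-(3 + α)) := by
    rw [abs_mul, abs_mul, abs_mul, abs_neg, abs_of_nonneg (by linarith : (0:ℝ) ≤ 1 + α),
      abs_of_pos (Real.rpow_pos_of_pos hy _),
      show |(-(1 + α) - 1)| = 2 + α by rw [show -(1 + α) - 1 = -(2 + α) by ring, abs_neg,
        abs_of_nonneg (by linarith : (0:ℝ) ≤ 2 + α)],
      show -(1 + α) - 1 - 1 = -(3 + α) by ring]
    have := mul_le_mul_of_nonneg_right (stmt_absU_le_one hτ hy.le)
      (by positivity : (0:ℝ) ≤ (1 + α) * ((2 + α) * y ^ (-(3 + α))))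
    nlinarith [this]
  calc |stmtG2 τ α y| ≤ (|stmtU2 τ y * y ^ (-(1 + α))|
        + |2 * (stmtU1 τ y * (-(1 + α)) * y ^ (-(1 + α) - 1))|
        + |stmtU τ y * (-(1 + α)) * ((-(1 + α) - 1) * y ^ (-(1 + α) - 1 - 1))|) / 2 := by
        rw [stmtG2, abs_div, abs_two]
        gcongr
        exact abs_add_three _ _ _
    _ ≤ (24 + 6 * (1 + α) + (1 + α) * (2 + α)) * y ^ (-(3 + α)) := by
        nlinarith [hr, mul_nonneg (mul_nonneg (by linarith : (0:ℝ) ≤ 1 + α)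
            (by linarith : (0:ℝ) ≤ 2 + α)) hr.le,
          mul_nonneg (by linarith : (0:ℝ) ≤ 1 + α) hr.le]
end

lemma stmt_sq_rpow {x : ℝ} (hx : 0 ≤ x) (c : ℝ) : (x ^ (2:ℕ)) ^ c = x ^ (2 * c) := by
  rw [← Real.rpow_natCast x 2, ← Real.rpow_mul hx]
  norm_num

lemma stmt_contOn_G2 (τ α : ℝ) : ContinuousOn (stmtG2 τ α) (Set.Ioi 0) := by
  have hU2 : Continuous (stmtU2 τ) := by unfold stmtU2; fun_prop
  have hU1 : Continuous (stmtU1 τ) := by unfold stmtU1; fun_prop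
  have hU : Continuous (stmtU τ) := by unfold stmtU; fun_prop
  have hr : ∀ c : ℝ, ContinuousOn (fun x : ℝ => x ^ c) (Set.Ioi 0) := fun c x hx =>
    (Real.continuousAt_rpow_const x c (Or.inl (ne_of_gt hx))).continuousWithinAt
  unfold stmtG2
  exact (((hU2.continuousOn.mul (hr _)).add (continuousOn_const.mul
    ((hU1.continuousOn.mul continuousOn_const).mul (hr _)))).add
    ((hU.continuousOn.mul continuousOn_const).mul (continuousOn_const.mul (hr _)))).div_const 2

/-- membership of `g_{α,τ}(x) = (1−e^{−x})² e^{−τx}/(2x^{1+α})`,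
`α = d/2 − 1 + α'`, in the class `𝒬_β` with `β = (2α, 2(1+α), 2(1+α))`: `g_{α,τ}` is `C²`
on `(0,∞)`, the weighted integrability conditions hold, and the stated `limsup`s at `0⁺`
are finite (expressed as eventual boundedness along `𝓝[>] 0`). -/
theorem stmt13 (d : ℕ) (hd : 2 ≤ d) (α' α τ : ℝ) (h0 : 0 < α') (h1 : α' < 1)
    (hα : α = (d : ℝ) / 2 - 1 + α') (hτ : 0 ≤ τ) (g : ℝ → ℝ)
    (hg : g = fun x : ℝ =>
      (1 - Real.exp (-x)) ^ 2 * Real.exp (-(τ * x)) / (2 * x ^ (1 + α))) :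
    ContDiffOn ℝ 2 g (Set.Ioi 0) ∧
      IntegrableOn (fun x : ℝ => x ^ (d - 1) * |g (x ^ 2)|) (Set.Ioi 0) ∧
      IntegrableOn (fun x : ℝ => x ^ d * |deriv g (x ^ 2)|) (Set.Ioi 1) ∧
      IntegrableOn (fun x : ℝ => x ^ (d + 1) * |deriv (deriv g) (x ^ 2)|) (Set.Ioi 1) ∧
      Filter.IsBoundedUnder (· ≤ ·) (nhdsWithin 0 (Set.Ioi 0))
        (fun x : ℝ => x ^ (2 * α) * |g (x ^ 2)|) ∧
      Filter.IsBoundedUnder (· ≤ ·) (nhdsWithin 0 (Set.Ioi 0))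
        (fun x : ℝ => x ^ (2 * (1 + α)) * |deriv g (x ^ 2)|) ∧
      Filter.IsBoundedUnder (· ≤ ·) (nhdsWithin 0 (Set.Ioi 0))
        (fun x : ℝ => x ^ (2 * (1 + α)) * |deriv (deriv g) (x ^ 2)|) := by
  have hdR : (2:ℝ) ≤ (d:ℝ) := by exact_mod_cast hd
  have hα0 : 0 ≤ α := by rw [hα]; linarith
  -- g agrees with stmtG on Ioi 0
  have hgG : Set.EqOn g (stmtG τ α) (Set.Ioi 0) := by
    intro y hy
    have hy0 : (0:ℝ) < y := hy
    have hne : y ^ (1 + α) ≠ 0 := ne_of_gt (Real.rpow_pos_of_pos hy0 _)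
    rw [hg]
    simp only [stmtG, stmtU, Real.rpow_neg hy0.le]
    field_simp
  have hgd : ∀ y : ℝ, 0 < y → deriv g y = stmtG1 τ α y := fun y hy =>
    ((hasDerivAt_stmtG τ α hy).congr_of_eventuallyEq
      (Filter.eventuallyEq_of_mem (Ioi_mem_nhds hy) hgG)).deriv
  have hgd2 : ∀ y : ℝ, 0 < y → deriv (deriv g) y = stmtG2 τ α y := by
    intro y hy
    have hev : deriv g =ᶠ[nhds y] stmtG1 τ α :=
      Filter.eventuallyEq_of_mem (Ioi_mem_nhds hy) (fun z hz => hgd z hz)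
    rw [hev.deriv_eq, (hasDerivAt_stmtG1 τ α hy).deriv]
  -- continuity facts
  have hcontG : ContinuousOn (stmtG τ α) (Set.Ioi 0) := fun y hy =>
    (hasDerivAt_stmtG τ α hy).continuousAt.continuousWithinAt
  have hcontG1 : ContinuousOn (stmtG1 τ α) (Set.Ioi 0) := fun y hy =>
    (hasDerivAt_stmtG1 τ α hy).continuousAt.continuousWithinAt
  have hmapsq : ∀ x : ℝ, 0 < x → (0:ℝ) < x ^ 2 := fun x hx => by positivity
  refine ⟨?_, ?_, ?_, ?_, ?_, ?_, ?_⟩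
  · -- C² on Ioi 0
    rw [hg]
    have hnum : ContDiff ℝ 2 (fun x : ℝ => (1 - Real.exp (-x)) ^ 2 * Real.exp (-(τ * x))) := by
      fun_prop
    have hden : ContDiffOn ℝ 2 (fun x : ℝ => 2 * x ^ (1 + α)) (Set.Ioi 0) :=
      contDiffOn_const.mul (fun x hx =>
        (Real.contDiffAt_rpow_const_of_ne (ne_of_gt (Set.mem_Ioi.mp hx))).contDiffWithinAt)
    refine hnum.contDiffOn.div hden (fun x hx => ?_)
    have hx0 : (0:ℝ) < x := hx
    have := Real.rpow_pos_of_pos hx0 (1 + α)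
    positivity
  · -- integrability of x^(d-1) |g(x^2)| on Ioi 0
    have hcont : ContinuousOn (fun x : ℝ => x ^ (d - 1) * |g (x ^ 2)|) (Set.Ioi 0) := by
      have h2 : ContinuousOn (fun x : ℝ => x ^ (d - 1) * |stmtG τ α (x ^ 2)|) (Set.Ioi 0) := by
        refine (continuous_pow (d - 1)).continuousOn.mul (ContinuousOn.abs ?_)
        intro x hx
        have hx0 : (0:ℝ) < x := hx
        have hc1 : ContinuousAt (stmtG τ α) (x ^ 2) :=
          hcontG.continuousAt (Ioi_mem_nhds (hmapsq x hx0))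
        have hc2 : ContinuousAt (fun x : ℝ => x ^ 2) x := (continuous_pow 2).continuousAt
        exact (hc1.comp (f := fun x : ℝ => x ^ 2) hc2).continuousWithinAt
      exact h2.congr (fun x hx => by rw [hgG (Set.mem_Ioi.mpr (hmapsq x hx))])
    rw [show Set.Ioi (0:ℝ) = Set.Ioc 0 1 ∪ Set.Ioi 1 from
      (Set.Ioc_union_Ioi_eq_Ioi zero_le_one).symm]
    apply IntegrableOn.union
    · -- Ioc 0 1 : bounded by 1
      refine Integrable.mono' (integrableOn_const (C := (1:ℝ)) measure_Ioc_lt_top.ne)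
        ((hcont.mono Set.Ioc_subset_Ioi_self).aestronglyMeasurable measurableSet_Ioc) ?_
      rw [ae_restrict_iff' measurableSet_Ioc]
      refine Filter.Eventually.of_forall (fun x hx => ?_)
      obtain ⟨hx0, hx1⟩ := hx
      have hsq := hmapsq x hx0
      rw [Real.norm_eq_abs, abs_of_nonneg (mul_nonneg (pow_nonneg hx0.le _) (abs_nonneg _)),
        hgG (Set.mem_Ioi.mpr hsq)]
      have key : (x:ℝ) ^ (d - 1) * (x ^ 2 : ℝ) ^ (1 - α) = x ^ ((3:ℝ) - 2 * α') := by
        rw [stmt_sq_rpow hx0.le, ← Real.rpow_natCast x (d - 1), ← Real.rpow_add hx0]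
        congr 1
        push_cast [Nat.cast_sub (by omega : 1 ≤ d)]
        rw [hα]; ring
      calc x ^ (d - 1) * |stmtG τ α (x ^ 2)|
          ≤ x ^ (d - 1) * ((x ^ 2 : ℝ) ^ (1 - α) / 2) :=
            mul_le_mul_of_nonneg_left (stmt_absG_le_left hτ hsq) (pow_nonneg hx0.le _)
        _ = x ^ ((3:ℝ) - 2 * α') / 2 := by rw [← key]; ring
        _ ≤ 1 := by
            have := Real.rpow_le_one hx0.le hx1 (by linarith : (0:ℝ) ≤ 3 - 2 * α')
            linarith
    · -- Ioi 1 : bounded by x ^ (-1 - 2α')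
      refine Integrable.mono' (integrableOn_Ioi_rpow_of_lt
        (show (-1:ℝ) - 2 * α' < -1 by linarith) one_pos)
        ((hcont.mono (Set.Ioi_subset_Ioi zero_le_one)).aestronglyMeasurable
          measurableSet_Ioi) ?_
      rw [ae_restrict_iff' measurableSet_Ioi]
      refine Filter.Eventually.of_forall (fun x hx => ?_)
      have hx1 : (1:ℝ) < x := hx
      have hx0 : (0:ℝ) < x := lt_trans one_pos hx1
      have hsq := hmapsq x hx0
      rw [Real.norm_eq_abs, abs_of_nonneg (mul_nonneg (pow_nonneg hx0.le _) (abs_nonneg _)),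
        hgG (Set.mem_Ioi.mpr hsq)]
      have key : (x:ℝ) ^ (d - 1) * (x ^ 2 : ℝ) ^ (-(1 + α)) = x ^ ((-1:ℝ) - 2 * α') := by
        rw [stmt_sq_rpow hx0.le, ← Real.rpow_natCast x (d - 1), ← Real.rpow_add hx0]
        congr 1
        push_cast [Nat.cast_sub (by omega : 1 ≤ d)]
        rw [hα]; ring
      calc x ^ (d - 1) * |stmtG τ α (x ^ 2)|
          ≤ x ^ (d - 1) * ((x ^ 2 : ℝ) ^ (-(1 + α)) / 2) :=
            mul_le_mul_of_nonneg_left (stmt_absG_le_right hτ hsq) (pow_nonneg hx0.le _)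
        _ = x ^ ((-1:ℝ) - 2 * α') / 2 := by rw [← key]; ring
        _ ≤ x ^ ((-1:ℝ) - 2 * α') := by
            have := Real.rpow_pos_of_pos hx0 ((-1:ℝ) - 2 * α')
            linarith
  · -- integrability of x^d |deriv g (x^2)| on Ioi 1
    have hcont : ContinuousOn (fun x : ℝ => x ^ d * |deriv g (x ^ 2)|) (Set.Ioi 1) := by
      have h2 : ContinuousOn (fun x : ℝ => x ^ d * |stmtG1 τ α (x ^ 2)|) (Set.Ioi 1) := by
        refine (continuous_pow d).continuousOn.mul (ContinuousOn.abs ?_)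
        intro x hx
        have hx0 : (0:ℝ) < x := lt_trans one_pos hx
        have hc1 : ContinuousAt (stmtG1 τ α) (x ^ 2) :=
          hcontG1.continuousAt (Ioi_mem_nhds (hmapsq x hx0))
        have hc2 : ContinuousAt (fun x : ℝ => x ^ 2) x := (continuous_pow 2).continuousAt
        exact (hc1.comp (f := fun x : ℝ => x ^ 2) hc2).continuousWithinAt
      exact h2.congr (fun x hx => by
        rw [hgd _ (hmapsq x (lt_trans one_pos hx))])
    refine Integrable.mono' ((integrableOn_Ioi_rpow_of_lt
        (show (-2:ℝ) < -1 by norm_num) one_pos).const_mul (4 + α))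
      (hcont.aestronglyMeasurable measurableSet_Ioi) ?_
    rw [ae_restrict_iff' measurableSet_Ioi]
    refine Filter.Eventually.of_forall (fun x hx => ?_)
    have hx1 : (1:ℝ) < x := hx
    have hx0 : (0:ℝ) < x := lt_trans one_pos hx1
    have hsq := hmapsq x hx0
    rw [Real.norm_eq_abs, abs_of_nonneg (mul_nonneg (pow_nonneg hx0.le _) (abs_nonneg _)),
      hgd _ hsq]
    have key : (x:ℝ) ^ d * (x ^ 2 : ℝ) ^ (-(2 + α)) = x ^ ((d:ℝ) + 2 * (-(2 + α))) := by
      rw [stmt_sq_rpow hx0.le, ← Real.rpow_natCast x d, ← Real.rpow_add hx0]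
    calc x ^ d * |stmtG1 τ α (x ^ 2)|
        ≤ x ^ d * ((4 + α) * (x ^ 2 : ℝ) ^ (-(2 + α))) :=
          mul_le_mul_of_nonneg_left (stmt_absG1_le_right hτ hα0 hsq) (pow_nonneg hx0.le _)
      _ = (4 + α) * (x ^ d * (x ^ 2 : ℝ) ^ (-(2 + α))) := by ring
      _ = (4 + α) * x ^ ((d:ℝ) + 2 * (-(2 + α))) := by rw [key]
      _ ≤ (4 + α) * x ^ (-2:ℝ) := by
          refine mul_le_mul_of_nonneg_left ?_ (by linarith)
          refine Real.rpow_le_rpow_of_exponent_le hx1.le ?_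
          rw [hα]; linarith
  · -- integrability of x^(d+1) |deriv² g (x^2)| on Ioi 1
    have hcont : ContinuousOn (fun x : ℝ => x ^ (d + 1) * |deriv (deriv g) (x ^ 2)|)
        (Set.Ioi 1) := by
      have h2 : ContinuousOn (fun x : ℝ => x ^ (d + 1) * |stmtG2 τ α (x ^ 2)|)
          (Set.Ioi 1) := by
        refine (continuous_pow (d + 1)).continuousOn.mul (ContinuousOn.abs ?_)
        intro x hx
        have hx0 : (0:ℝ) < x := lt_trans one_pos hx
        have hc1 : ContinuousAt (stmtG2 τ α) (x ^ 2) :=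
          (stmt_contOn_G2 τ α).continuousAt (Ioi_mem_nhds (hmapsq x hx0))
        have hc2 : ContinuousAt (fun x : ℝ => x ^ 2) x := (continuous_pow 2).continuousAt
        exact (hc1.comp (f := fun x : ℝ => x ^ 2) hc2).continuousWithinAt
      exact h2.congr (fun x hx => by
        rw [hgd2 _ (hmapsq x (lt_trans one_pos hx))])
    refine Integrable.mono' ((integrableOn_Ioi_rpow_of_lt
        (show (-2:ℝ) < -1 by norm_num) one_pos).const_mul
        (24 + 6 * (1 + α) + (1 + α) * (2 + α)))
      (hcont.aestronglyMeasurable measurableSet_Ioi) ?_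
    rw [ae_restrict_iff' measurableSet_Ioi]
    refine Filter.Eventually.of_forall (fun x hx => ?_)
    have hx1 : (1:ℝ) < x := hx
    have hx0 : (0:ℝ) < x := lt_trans one_pos hx1
    have hsq := hmapsq x hx0
    rw [Real.norm_eq_abs, abs_of_nonneg (mul_nonneg (pow_nonneg hx0.le _) (abs_nonneg _)),
      hgd2 _ hsq]
    have key : (x:ℝ) ^ (d + 1) * (x ^ 2 : ℝ) ^ (-(3 + α)) = x ^ (((d:ℝ) + 1) + 2 * (-(3 + α))) := by
      rw [stmt_sq_rpow hx0.le, ← Real.rpow_natCast x (d + 1), ← Real.rpow_add hx0]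
      push_cast
      ring_nf
    calc x ^ (d + 1) * |stmtG2 τ α (x ^ 2)|
        ≤ x ^ (d + 1) * ((24 + 6 * (1 + α) + (1 + α) * (2 + α)) * (x ^ 2 : ℝ) ^ (-(3 + α))) :=
          mul_le_mul_of_nonneg_left (stmt_absG2_le_right hτ hα0 hsq) (pow_nonneg hx0.le _)
      _ = (24 + 6 * (1 + α) + (1 + α) * (2 + α)) * (x ^ (d + 1) * (x ^ 2 : ℝ) ^ (-(3 + α))) := by
          ring
      _ = (24 + 6 * (1 + α) + (1 + α) * (2 + α)) * x ^ (((d:ℝ) + 1) + 2 * (-(3 + α))) := by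
          rw [key]
      _ ≤ (24 + 6 * (1 + α) + (1 + α) * (2 + α)) * x ^ (-2:ℝ) := by
          refine mul_le_mul_of_nonneg_left ?_ (by nlinarith)
          refine Real.rpow_le_rpow_of_exponent_le hx1.le ?_
          rw [hα]; linarith
  · -- limsup 1
    refine ⟨1, Filter.eventually_map.mpr ?_⟩
    filter_upwards [Ioo_mem_nhdsGT_of_mem (Set.left_mem_Ico.mpr one_pos)] with x hx
    obtain ⟨hx0, hx1⟩ := hx
    have hsq := hmapsq x hx0
    rw [hgG (Set.mem_Ioi.mpr hsq)]
    have key : (x:ℝ) ^ (2 * α) * (x ^ 2 : ℝ) ^ (1 - α) = x ^ (2:ℝ) := by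
      rw [stmt_sq_rpow hx0.le, ← Real.rpow_add hx0]
      congr 1
      ring
    calc x ^ (2 * α) * |stmtG τ α (x ^ 2)|
        ≤ x ^ (2 * α) * ((x ^ 2 : ℝ) ^ (1 - α) / 2) :=
          mul_le_mul_of_nonneg_left (stmt_absG_le_left hτ hsq)
            (Real.rpow_nonneg hx0.le _)
      _ = x ^ (2:ℝ) / 2 := by rw [← key]; ring
      _ ≤ 1 := by
          have := Real.rpow_le_one hx0.le hx1.le (by norm_num : (0:ℝ) ≤ 2)
          linarith
  · -- limsup 2
    refine ⟨3 + τ + α, Filter.eventually_map.mpr ?_⟩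
    filter_upwards [Ioo_mem_nhdsGT_of_mem (Set.left_mem_Ico.mpr one_pos)] with x hx
    obtain ⟨hx0, hx1⟩ := hx
    have hsq := hmapsq x hx0
    rw [hgd _ hsq]
    have key : (x:ℝ) ^ (2 * (1 + α)) * (x ^ 2 : ℝ) ^ (-α) = x ^ (2:ℝ) := by
      rw [stmt_sq_rpow hx0.le, ← Real.rpow_add hx0]
      congr 1
      ring
    calc x ^ (2 * (1 + α)) * |stmtG1 τ α (x ^ 2)|
        ≤ x ^ (2 * (1 + α)) * ((3 + τ + α) * (x ^ 2 : ℝ) ^ (-α)) :=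
          mul_le_mul_of_nonneg_left (stmt_absG1_le_left hτ hα0 hsq)
            (Real.rpow_nonneg hx0.le _)
      _ = (3 + τ + α) * x ^ (2:ℝ) := by rw [← key]; ring
      _ ≤ (3 + τ + α) * 1 := mul_le_mul_of_nonneg_left
          (Real.rpow_le_one hx0.le hx1.le (by norm_num : (0:ℝ) ≤ 2)) (by linarith)
      _ = 3 + τ + α := mul_one _
  · -- limsup 3
    refine ⟨12 + (1 + α) * (2 + τ) + (1 + α) * (2 + α), Filter.eventually_map.mpr ?_⟩
    filter_upwards [Ioo_mem_nhdsGT_of_mem (Set.left_mem_Ico.mpr one_pos)] with x hx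
    obtain ⟨hx0, hx1⟩ := hx
    have hsq := hmapsq x hx0
    rw [hgd2 _ hsq]
    have key : (x:ℝ) ^ (2 * (1 + α)) * (x ^ 2 : ℝ) ^ (-(1 + α)) = 1 := by
      rw [stmt_sq_rpow hx0.le, ← Real.rpow_add hx0,
        show 2 * (1 + α) + 2 * (-(1 + α)) = (0:ℝ) by ring, Real.rpow_zero]
    calc x ^ (2 * (1 + α)) * |stmtG2 τ α (x ^ 2)|
        ≤ x ^ (2 * (1 + α)) * ((12 + (1 + α) * (2 + τ) + (1 + α) * (2 + α))
            * (x ^ 2 : ℝ) ^ (-(1 + α))) :=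
          mul_le_mul_of_nonneg_left (stmt_absG2_le_left hτ hα0 hsq)
            (Real.rpow_nonneg hx0.le _)
      _ = (12 + (1 + α) * (2 + τ) + (1 + α) * (2 + α))
            * (x ^ (2 * (1 + α)) * (x ^ 2 : ℝ) ^ (-(1 + α))) := by ring
      _ = (12 + (1 + α) * (2 + τ) + (1 + α) * (2 + α)) := by rw [key, mul_one]
end
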